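/- arXiv:2403.14644 — 5 statements merged into one kernel-verified Lean document; each statement's English description precedes it below -/
import Mathlib

section
/- For every natural number p and every real number z with 0 ≤ z ≤ 2π, the log–sine integral ∫₀ᶻ x^(2p) · log(2·sin(x/2)) dx equals −(2p)! · ∑_{i=0}^{2p} ((−1)^(i+⌊(i+1)/2⌋) / (2p−i)!) · Cl_{i+2}(z) · z^(2p−i). -/
open Real MeasureTheory Finset

/-- The Clausen function `Cl n θ`: for even `n` it is `∑ sin (k θ) / k ^ n`,
for odd `n` it is `∑ cos (k θ) / k ^ n`. -/
noncomputable def Cl (n : ℕ) (θ : ℝ) : ℝ :=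
  if Even n then ∑' k : ℕ+, Real.sin (k * θ) / (k : ℝ) ^ n
  else ∑' k : ℕ+, Real.cos (k * θ) / (k : ℝ) ^ n



/-- the trig function used in `Cl n` -/
noncomputable def trig (n : ℕ) : ℝ → ℝ := if Even n then Real.sin else Real.cos

lemma Cl_eq (n : ℕ) (θ : ℝ) : Cl n θ = ∑' k : ℕ+, trig n (k * θ) / (k : ℝ) ^ n := by
  by_cases h : Even n <;> simp [Cl, trig, h]

lemma abs_trig_le (n : ℕ) (x : ℝ) : |trig n x| ≤ 1 := by
  by_cases h : Even n <;> simp [trig, h, Real.abs_sin_le_one, Real.abs_cos_le_one]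

lemma trig_zero {n : ℕ} (h : Even n) : trig n 0 = 0 := by simp [trig, h]

lemma summable_pnat_rpow {j : ℕ} (hj : 2 ≤ j) : Summable (fun k : ℕ+ => (1:ℝ) / (k:ℝ) ^ j) := by
  have h : Summable (fun k : ℕ => (1:ℝ) / (k:ℝ) ^ j) := by
    rw [Real.summable_one_div_nat_pow]; exact hj
  exact h.comp_injective PNat.coe_injective

lemma summable_bound_mul {j : ℕ} (hj : 2 ≤ j) (C : ℝ) :
    Summable (fun k : ℕ+ => C / (k:ℝ) ^ j) := by
  simpa [div_eq_mul_inv, mul_comm, one_div] using (summable_pnat_rpow hj).mul_left C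

lemma hasSum_Cl {n : ℕ} (hn : 2 ≤ n) (θ : ℝ) :
    HasSum (fun k : ℕ+ => trig n (k * θ) / (k : ℝ) ^ n) (Cl n θ) := by
  rw [Cl_eq]
  apply Summable.hasSum
  apply Summable.of_norm
  apply (summable_pnat_rpow hn).of_nonneg_of_le (fun k => norm_nonneg _)
  intro k
  have hk : (0:ℝ) < (k:ℝ) ^ n := by positivity
  rw [norm_div, Real.norm_eq_abs, Real.norm_eq_abs, abs_of_pos hk, div_le_div_iff₀ hk hk, one_mul]
  nlinarith [abs_trig_le n ((k:ℝ) * θ), hk]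

lemma Cl_zero_even {n : ℕ} (h : Even n) : Cl n 0 = 0 := by
  simp [Cl, h]

lemma continuous_Cl {n : ℕ} (hn : 2 ≤ n) : Continuous (Cl n) := by
  have : Continuous (fun θ => ∑' k : ℕ+, trig n (k * θ) / (k : ℝ) ^ n) := by
    apply continuous_tsum
    · intro k
      by_cases h : Even n <;>
        simp only [trig, h, if_true, if_false] <;> fun_prop
    · exact summable_pnat_rpow hn
    · intro k x
      have hk : (0:ℝ) < (k:ℝ) ^ n := by positivity
      rw [Real.norm_eq_abs, abs_div, abs_of_pos hk, div_le_div_iff₀ hk hk, one_mul]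
      nlinarith [abs_trig_le n ((k:ℝ) * x), hk]
  exact this.congr (fun θ => (Cl_eq n θ).symm)


noncomputable def sgn (j : ℕ) : ℝ := if Even j then -1 else 1

noncomputable def ee : ℕ → ℕ → ℝ
  | j, 0 => sgn j
  | j, (i+1) => -(sgn j) * ee (j+1) i

lemma neg_one_pow_congr' {a b : ℕ} (h : a % 2 = b % 2) : ((-1:ℝ))^a = (-1)^b := by
  rcases Nat.even_or_odd a with ha | ha
  · rw [ha.neg_one_pow, (Nat.even_iff.2 (by rw [← Nat.even_iff.1 ha]; omega)).neg_one_pow]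
  · rw [ha.neg_one_pow, (Nat.odd_iff.2 (by rw [← Nat.odd_iff.1 ha]; omega)).neg_one_pow]

lemma sgn_parity (j : ℕ) : sgn (j + 2) = sgn j := by
  by_cases h : Even j
  · simp [sgn, h, Nat.even_add, if_pos]
  · simp [sgn, Nat.even_add, h]

lemma ee_parity (i : ℕ) : ∀ j, ee (j + 2) i = ee j i := by
  induction i with
  | zero => intro j; simpa [ee] using sgn_parity j
  | succ i ih => intro j; show -(sgn (j+2)) * ee (j+3) i = -(sgn j) * ee (j+1) i
                 rw [sgn_parity j, show j+3 = (j+1)+2 from rfl, ih (j+1)]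

lemma ee_two_three (i : ℕ) :
    ee 2 i = (-1:ℝ)^(i + i/2 + 1) ∧ ee 3 i = (-1:ℝ)^(i + (i+1)/2) := by
  induction i with
  | zero =>
    refine ⟨?_, ?_⟩
    · show sgn 2 = _; rw [sgn, if_pos even_two]; norm_num
    · show sgn 3 = _; rw [sgn, if_neg (by decide)]; norm_num
  | succ i ih =>
    constructor
    · show -(sgn 2) * ee 3 i = _
      have h2 : sgn 2 = -1 := by rw [sgn, if_pos even_two]
      rw [h2, ih.2, neg_neg, one_mul]
      exact neg_one_pow_congr' (by omega)
    · show -(sgn 3) * ee 4 i = _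
      have h3 : sgn 3 = 1 := by rw [sgn, if_neg (by decide)]
      rw [h3, show (4:ℕ) = 2+2 from rfl, ee_parity i 2, ih.1, neg_one_mul,
        ← neg_one_mul, ← pow_succ']
      exact neg_one_pow_congr' (by omega)

section parts
variable {z c : ℝ} (hc : c ≠ 0)

lemma partsC (n : ℕ) (hc : c ≠ 0) (z : ℝ) :
    ∫ x in (0:ℝ)..z, x ^ n * Real.cos (c * x) =
      z ^ n * Real.sin (c * z) / c - (n : ℝ) / c * ∫ x in (0:ℝ)..z, x ^ (n-1) * Real.sin (c * x) := by
  have h := intervalIntegral.integral_mul_deriv_eq_deriv_mul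
    (u := fun x : ℝ => x ^ n) (u' := fun x : ℝ => n * x ^ (n-1))
    (v := fun x => Real.sin (c * x) / c) (v' := fun x => Real.cos (c * x))
    (a := 0) (b := z)
    (fun x _ => hasDerivAt_pow n x)
    (fun x _ => by
      have : HasDerivAt (fun x => Real.sin (c * x)) (Real.cos (c * x) * c) x := by
        simpa [mul_comm] using ((hasDerivAt_id x).const_mul c).sin
      simpa [mul_div_assoc, mul_div_cancel_right₀ _ hc] using this.div_const c)
    (by apply Continuous.intervalIntegrable; fun_prop)
    (by apply Continuous.intervalIntegrable; fun_prop)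
  rw [h]
  have heq : ∀ x : ℝ, (n:ℝ) * x ^ (n-1) * (Real.sin (c*x) / c) =
      (n:ℝ)/c * (x ^ (n-1) * Real.sin (c*x)) := fun x => by ring
  simp only [heq, intervalIntegral.integral_const_mul]
  simp only [mul_zero, zero_mul, Real.sin_zero, zero_div, mul_zero, sub_zero]
  ring

lemma partsS (n : ℕ) (hc : c ≠ 0) (z : ℝ) :
    ∫ x in (0:ℝ)..z, x ^ n * Real.sin (c * x) =
      ((0:ℝ) ^ n - z ^ n * Real.cos (c * z)) / c + (n : ℝ) / c * ∫ x in (0:ℝ)..z, x ^ (n-1) * Real.cos (c * x) := by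
  have h := intervalIntegral.integral_mul_deriv_eq_deriv_mul
    (u := fun x : ℝ => x ^ n) (u' := fun x : ℝ => n * x ^ (n-1))
    (v := fun x => -Real.cos (c * x) / c) (v' := fun x => Real.sin (c * x))
    (a := 0) (b := z)
    (fun x _ => hasDerivAt_pow n x)
    (fun x _ => by
      have : HasDerivAt (fun x => -Real.cos (c * x)) (Real.sin (c * x) * c) x := by
        simpa [mul_comm, Pi.neg_def] using ((hasDerivAt_id x).const_mul c).cos.neg
      simpa [neg_div, mul_div_assoc, mul_div_cancel_right₀ _ hc] using this.div_const c)
    (by apply Continuous.intervalIntegrable; fun_prop)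
    (by apply Continuous.intervalIntegrable; fun_prop)
  rw [h]
  have heq : ∀ x : ℝ, (n:ℝ) * x ^ (n-1) * (-Real.cos (c*x) / c) =
      (-((n:ℝ)/c)) * (x ^ (n-1) * Real.cos (c*x)) := fun x => by ring
  simp only [heq, intervalIntegral.integral_const_mul]
  simp only [mul_zero, zero_mul, Real.cos_zero]
  ring
end parts


lemma hasSum_pnat_of_hasSum {f : ℕ → ℝ} {L : ℝ} (h : HasSum f L) (h0 : f 0 = 0) :
    HasSum (fun k : ℕ+ => f k) L := by
  apply (Function.Injective.hasSum_iff PNat.coe_injective ?_).2 h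
  intro x hx
  have : x = 0 := by
    by_contra hne
    exact hx ⟨⟨x, Nat.pos_of_ne_zero hne⟩, rfl⟩
  rw [this, h0]

lemma hasSum_poisson {r : ℝ} (hr0 : 0 ≤ r) (hr1 : r < 1) (x : ℝ) :
    HasSum (fun k : ℕ+ => r ^ (k:ℕ) * Real.cos ((k:ℝ) * x) / (k:ℝ))
      (-(1/2) * Real.log (1 - 2*r*Real.cos x + r^2)) := by
  set w : ℂ := (r : ℂ) * Complex.exp ((x : ℝ) * Complex.I) with hw
  have hnw : ‖w‖ < 1 := by
    rw [hw, norm_mul, Complex.norm_exp_ofReal_mul_I]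
    simpa [abs_of_nonneg hr0] using hr1
  have hsum := Complex.hasSum_re (Complex.hasSum_taylorSeries_neg_log hnw)
  have hre : ∀ n : ℕ, ((w ^ n / n : ℂ)).re = r ^ n * Real.cos (n * x) / n := by
    intro n
    rw [Complex.div_natCast_re]
    congr 1
    rw [hw, mul_pow, ← Complex.exp_nat_mul]
    have : ((n : ℂ) * ((x:ℝ) * Complex.I)) = ((n * x : ℝ) : ℂ) * Complex.I := by push_cast; ring
    rw [this, ← Complex.ofReal_pow, Complex.re_ofReal_mul, Complex.exp_ofReal_mul_I_re]
  have habs : ‖1 - w‖ ^ 2 = 1 - 2*r*Real.cos x + r^2 := by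
    rw [Complex.sq_norm, Complex.normSq_apply]
    have hwre : (1 - w).re = 1 - r * Real.cos x := by
      simp [hw, Complex.exp_ofReal_mul_I_re, Complex.sub_re, Complex.mul_re,
        Complex.exp_ofReal_mul_I_im]
    have hwim : (1 - w).im = -(r * Real.sin x) := by
      simp [hw, Complex.sub_im, Complex.mul_im, Complex.exp_ofReal_mul_I_re,
        Complex.exp_ofReal_mul_I_im]
    rw [hwre, hwim]
    nlinarith [Real.sin_sq_add_cos_sq x]
  have hpos : (0:ℝ) < 1 - 2*r*Real.cos x + r^2 := by
    nlinarith [Real.neg_one_le_cos x, Real.cos_le_one x, Real.sin_sq_add_cos_sq x]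
  have hlogre : ((-Complex.log (1 - w)).re) = -(1/2) * Real.log (1 - 2*r*Real.cos x + r^2) := by
    rw [Complex.neg_re, Complex.log_re]
    have habs' : ‖1 - w‖ = Real.sqrt (1 - 2*r*Real.cos x + r^2) := by
      rw [← habs, Real.sqrt_sq (norm_nonneg _)]
    rw [habs', Real.log_sqrt hpos.le]
    ring
  rw [← hlogre]
  simp only [hre] at hsum
  exact hasSum_pnat_of_hasSum hsum (by simp)


noncomputable def Dom (x : ℝ) : ℝ := |Real.log x| + |Real.log (2*π - x)| + 3

lemma abs_log_le_rpow {x : ℝ} (hx : 0 < x) (hx1 : x ≤ 1) : |Real.log x| ≤ 2 * x ^ (-(1/2) : ℝ) := by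
  have hs : 0 < Real.sqrt x := Real.sqrt_pos.2 hx
  have h1 : Real.log x ≤ 0 := Real.log_nonpos hx.le hx1
  rw [abs_of_nonpos h1]
  have h2 : Real.log x = 2 * Real.log (Real.sqrt x) := by
    rw [Real.log_sqrt hx.le]; ring
  have h3 : -Real.log (Real.sqrt x) = Real.log (Real.sqrt x)⁻¹ := (Real.log_inv _).symm
  have h4 : Real.log (Real.sqrt x)⁻¹ ≤ (Real.sqrt x)⁻¹ - 1 :=
    Real.log_le_sub_one_of_pos (inv_pos.2 hs)
  have h5 : (Real.sqrt x)⁻¹ = x ^ (-(1/2) : ℝ) := by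
    rw [Real.sqrt_eq_rpow, ← Real.rpow_neg_one, ← Real.rpow_mul hx.le]
    norm_num
  rw [h5] at h3 h4
  rw [h2]
  nlinarith [Real.rpow_pos_of_pos hx (-(1/2):ℝ)]

lemma intervalIntegrable_abs_log {b : ℝ} (hb : 0 ≤ b) :
    IntervalIntegrable (fun x => |Real.log x|) volume 0 b := by
  have hg : IntervalIntegrable (fun x : ℝ => 2 * x ^ (-(1/2) : ℝ) + b) volume 0 b :=
    ((intervalIntegral.intervalIntegrable_rpow' (by norm_num)).const_mul 2).add
      intervalIntegrable_const
  apply hg.mono_fun (Real.measurable_log.abs.aestronglyMeasurable)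
  rw [Set.uIoc_of_le hb, Filter.EventuallyLE, ae_restrict_iff' measurableSet_Ioc]
  filter_upwards with x hx
  have hrp : (0:ℝ) < x ^ (-(1/2) : ℝ) := Real.rpow_pos_of_pos hx.1 _
  have hgoal : |Real.log x| ≤ 2 * x ^ (-(1/2) : ℝ) + b := by
    rcases le_or_gt x 1 with h1 | h1
    · have := abs_log_le_rpow hx.1 h1
      linarith
    · have h2 : Real.log x ≤ x - 1 := Real.log_le_sub_one_of_pos (by linarith)
      have h3 : 0 ≤ Real.log x := Real.log_nonneg h1.le
      rw [abs_of_nonneg h3]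
      nlinarith [hx.2]
  calc ‖|Real.log x|‖ = |Real.log x| := by rw [Real.norm_eq_abs, abs_abs]
    _ ≤ 2 * x ^ (-(1/2) : ℝ) + b := hgoal
    _ ≤ ‖2 * x ^ (-(1/2) : ℝ) + b‖ := le_abs_self _

lemma intervalIntegrable_Dom {z : ℝ} (hz0 : 0 ≤ z) (hz1 : z ≤ 2*π) :
    IntervalIntegrable Dom volume 0 z := by
  have hπ : 0 < π := Real.pi_pos
  have h1 : IntervalIntegrable (fun x => |Real.log x|) volume 0 z :=
    intervalIntegrable_abs_log hz0
  have h2 : IntervalIntegrable (fun x => |Real.log (2*π - x)|) volume 0 z := by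
    have hbig : IntervalIntegrable (fun x => |Real.log x|) volume 0 (2*π) :=
      intervalIntegrable_abs_log (by linarith)
    have hcomp := hbig.comp_sub_left (2*π)
    simp only [sub_zero, sub_self] at hcomp
    exact hcomp.symm.mono_set
      (by rw [Set.uIcc_of_le hz0, Set.uIcc_of_le (by linarith : (0:ℝ) ≤ 2*π)]
          exact Set.Icc_subset_Icc le_rfl hz1)
  exact (h1.add h2).add intervalIntegrable_const

lemma Dom_nonneg {x : ℝ} : 0 ≤ Dom x := by
  have := abs_nonneg (Real.log x); have := abs_nonneg (Real.log (2*π - x)); unfold Dom; linarith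

/-- key two-sided bound on `sin (x/2)` -/
lemma sin_half_log_bounds {x : ℝ} (hx : x ∈ Set.Ioo 0 (2*π)) :
    -( |Real.log x| + |Real.log (2*π - x)| + Real.log π) ≤ Real.log (Real.sin (x/2)) ∧
      Real.log (Real.sin (x/2)) ≤ |Real.log x| + |Real.log (2*π - x)| := by
  have hπ : 0 < π := Real.pi_pos
  obtain ⟨hx0, hx2⟩ := hx
  have hsinpos : 0 < Real.sin (x/2) := Real.sin_pos_of_pos_of_lt_pi (by linarith) (by linarith)
  -- concavity lower bound : for t ∈ [0, π/2], 2t/π ≤ sin t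
  have hconc : ∀ t : ℝ, 0 ≤ t → t ≤ π/2 → 2*t/π ≤ Real.sin t := by
    intro t ht0 ht1
    have := Real.mul_le_sin ht0 ht1
    calc 2*t/π = 2/π * t := by ring
      _ ≤ Real.sin t := this
  -- the min value
  rcases le_or_gt x π with hle | hgt
  · -- use m = x
    have hlow : x/π ≤ Real.sin (x/2) := by
      have := hconc (x/2) (by linarith) (by linarith)
      calc x/π = 2*(x/2)/π := by ring
        _ ≤ Real.sin (x/2) := this
    have hup : Real.sin (x/2) ≤ x := (Real.sin_le (by linarith)).trans (by linarith)
    constructor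
    · have h1 : Real.log (x/π) ≤ Real.log (Real.sin (x/2)) :=
        Real.log_le_log (by positivity) hlow
      rw [Real.log_div (ne_of_gt hx0) (ne_of_gt hπ)] at h1
      have h2 : -|Real.log x| ≤ Real.log x := neg_abs_le _
      have h3 : (0:ℝ) ≤ |Real.log (2*π - x)| := abs_nonneg _
      linarith
    · have h1 : Real.log (Real.sin (x/2)) ≤ Real.log x := Real.log_le_log hsinpos hup
      have h2 : Real.log x ≤ |Real.log x| := le_abs_self _
      have h3 : (0:ℝ) ≤ |Real.log (2*π - x)| := abs_nonneg _
      linarith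
  · -- use m = 2π - x ; sin (x/2) = sin (π - x/2) = sin ((2π-x)/2)
    have hflip : Real.sin (x/2) = Real.sin ((2*π - x)/2) := by
      rw [show (2*π - x)/2 = π - x/2 by ring, Real.sin_pi_sub]
    have hy0 : 0 < 2*π - x := by linarith
    have hlow : (2*π - x)/π ≤ Real.sin (x/2) := by
      rw [hflip]
      have := hconc ((2*π - x)/2) (by linarith) (by linarith)
      calc (2*π - x)/π = 2*((2*π - x)/2)/π := by ring
        _ ≤ Real.sin ((2*π - x)/2) := this
    have hup : Real.sin (x/2) ≤ 2*π - x := by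
      rw [hflip]
      exact (Real.sin_le (by linarith)).trans (by linarith)
    constructor
    · have h1 : Real.log ((2*π - x)/π) ≤ Real.log (Real.sin (x/2)) :=
        Real.log_le_log (by positivity) hlow
      rw [Real.log_div (ne_of_gt hy0) (ne_of_gt hπ)] at h1
      have h2 : -|Real.log (2*π - x)| ≤ Real.log (2*π - x) := neg_abs_le _
      have h3 : (0:ℝ) ≤ |Real.log x| := abs_nonneg _
      linarith
    · have h1 : Real.log (Real.sin (x/2)) ≤ Real.log (2*π - x) := Real.log_le_log hsinpos hup
      have h2 : Real.log (2*π - x) ≤ |Real.log (2*π - x)| := le_abs_self _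
      have h3 : (0:ℝ) ≤ |Real.log x| := abs_nonneg _
      linarith

/-- master log bound: any `u` between `2 sin²(x/2)` and `5` has `|log u| ≤ 2 Dom x`. -/
lemma abs_log_le_Dom {x u : ℝ} (hx : x ∈ Set.Ioo 0 (2*π))
    (hu1 : 2 * Real.sin (x/2)^2 ≤ u) (hu2 : u ≤ 5) : |Real.log u| ≤ 2 * Dom x := by
  have hπ : 0 < π := Real.pi_pos
  obtain ⟨hlo, hhi⟩ := sin_half_log_bounds hx
  have hsinpos : 0 < Real.sin (x/2) :=
    Real.sin_pos_of_pos_of_lt_pi (by cases hx; linarith) (by cases hx; linarith)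
  have hu0 : 0 < u := lt_of_lt_of_le (by positivity) hu1
  have hlogπ : Real.log π ≤ 3 := by
    have := Real.log_le_sub_one_of_pos hπ
    nlinarith [Real.pi_lt_d2]
  have hlog2 : (0:ℝ) ≤ Real.log 2 := Real.log_nonneg (by norm_num)
  have h1 : Real.log (2 * Real.sin (x/2)^2) ≤ Real.log u := Real.log_le_log (by positivity) hu1
  have h2 : Real.log u ≤ Real.log 5 := Real.log_le_log hu0 hu2
  have h3 : Real.log (2 * Real.sin (x/2)^2) = Real.log 2 + 2 * Real.log (Real.sin (x/2)) := by
    rw [Real.log_mul (by norm_num) (by positivity), Real.log_pow]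
    push_cast; ring
  have h5 : Real.log 5 ≤ 4 := by nlinarith [Real.log_le_sub_one_of_pos (show (0:ℝ) < 5 by norm_num)]
  rw [abs_le]
  unfold Dom
  constructor
  · nlinarith [abs_nonneg (Real.log x), abs_nonneg (Real.log (2*π - x))]
  · nlinarith [abs_nonneg (Real.log x), abs_nonneg (Real.log (2*π - x))]

section swap
variable {z : ℝ} (hz : 0 ≤ z)

lemma continuous_trig (n : ℕ) : Continuous (trig n) := by
  by_cases h : Even n <;> simp only [trig, h, if_true, if_false] <;> fun_prop

/-- bound on the basic trig moment -/
lemma bound_T {j : ℕ} (q : ℕ) (hz : 0 ≤ z) (c : ℝ) :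
    |∫ x in (0:ℝ)..z, x ^ q * trig j (c * x)| ≤ z ^ q * z := by
  have h := intervalIntegral.norm_integral_le_of_norm_le_const (C := z ^ q)
    (f := fun x => x ^ q * trig j (c * x)) (a := 0) (b := z) ?_
  · rw [Real.norm_eq_abs] at h
    calc |∫ x in (0:ℝ)..z, x ^ q * trig j (c * x)| ≤ z ^ q * |z - 0| := h
    _ = z ^ q * z := by rw [sub_zero, abs_of_nonneg hz]
  · intro x hx
    rw [Set.uIoc_of_le hz] at hx
    rw [Real.norm_eq_abs, abs_mul]
    have h1 : |x ^ q| ≤ z ^ q := by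
      rw [abs_pow]; exact pow_le_pow_left₀ (abs_nonneg x) (by rw [abs_of_pos hx.1]; exact hx.2) q
    nlinarith [abs_trig_le j (c * x), abs_nonneg (x ^ q), pow_nonneg (abs_nonneg x) q,
      abs_trig_le j (c*x), abs_nonneg (trig j (c*x)), pow_nonneg hz q]

lemma summable_T {j j' q : ℕ} (hj : 2 ≤ j) (hz : 0 ≤ z) :
    Summable (fun k : ℕ+ => (∫ x in (0:ℝ)..z, x ^ q * trig j' ((k:ℝ) * x)) / (k:ℝ) ^ j) := by
  apply Summable.of_norm
  apply (summable_bound_mul hj (z ^ q * z)).of_nonneg_of_le (fun k => norm_nonneg _)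
  intro k
  have hk : (0:ℝ) < (k:ℝ) ^ j := by positivity
  rw [Real.norm_eq_abs, abs_div, abs_of_pos hk]
  exact div_le_div_of_nonneg_right (bound_T q hz _) hk.le

lemma swapA {j : ℕ} (hj : 2 ≤ j) (m : ℕ) (hz : 0 ≤ z) :
    ∫ x in (0:ℝ)..z, x ^ m * Cl j x =
      ∑' k : ℕ+, (∫ x in (0:ℝ)..z, x ^ m * trig j ((k:ℝ) * x)) / (k:ℝ) ^ j := by
  have hmeas : ∀ k : ℕ+, Integrable (fun x : ℝ => x ^ m * trig j ((k:ℝ) * x) / (k:ℝ) ^ j)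
      (volume.restrict (Set.Ioc 0 z)) := by
    intro k
    apply Continuous.integrableOn_Ioc
    exact ((continuous_pow m).mul ((continuous_trig j).comp (continuous_const.mul continuous_id))).div_const _
  have hsum : Summable (fun k : ℕ+ =>
      ∫ x in Set.Ioc (0:ℝ) z, ‖x ^ m * trig j ((k:ℝ) * x) / (k:ℝ) ^ j‖) := by
    apply (summable_bound_mul hj (z ^ m * z)).of_nonneg_of_le
      (fun k => integral_nonneg (fun x => norm_nonneg _))
    intro k
    have hk : (0:ℝ) < (k:ℝ) ^ j := by positivity
    have hb : ∀ x ∈ Set.Ioc (0:ℝ) z, ‖x ^ m * trig j ((k:ℝ) * x) / (k:ℝ) ^ j‖ ≤ z ^ m / (k:ℝ) ^ j := by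
      intro x hx
      rw [Real.norm_eq_abs, abs_div, abs_of_pos hk]
      apply div_le_div_of_nonneg_right _ hk.le
      rw [abs_mul]
      have h1 : |x ^ m| ≤ z ^ m := by
        rw [abs_pow]; exact pow_le_pow_left₀ (abs_nonneg x) (by rw [abs_of_pos hx.1]; exact hx.2) m
      nlinarith [abs_trig_le j ((k:ℝ) * x), abs_nonneg (x ^ m), pow_nonneg hz m,
        abs_nonneg (trig j ((k:ℝ)*x))]
    calc (∫ x in Set.Ioc (0:ℝ) z, ‖x ^ m * trig j ((k:ℝ) * x) / (k:ℝ) ^ j‖)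
        ≤ ∫ _x in Set.Ioc (0:ℝ) z, z ^ m / (k:ℝ) ^ j := by
          apply setIntegral_mono_on ((hmeas k).norm) (integrableOn_const (by
            simp [Real.volume_Ioc])) measurableSet_Ioc hb
      _ = z ^ m / (k:ℝ) ^ j * (volume (Set.Ioc (0:ℝ) z)).toReal := by
          rw [setIntegral_const, smul_eq_mul, mul_comm, Measure.real]
      _ = z ^ m * z / (k:ℝ) ^ j := by
          rw [Real.volume_Ioc, ENNReal.toReal_ofReal (by linarith), sub_zero]; ring
  rw [intervalIntegral.integral_of_le hz]
  have hpt : ∀ x : ℝ, x ^ m * Cl j x = ∑' k : ℕ+, x ^ m * trig j ((k:ℝ) * x) / (k:ℝ) ^ j := by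
    intro x
    rw [Cl_eq, ← tsum_mul_left]
    congr 1; ext k; rw [mul_div_assoc]
  calc ∫ x in Set.Ioc (0:ℝ) z, x ^ m * Cl j x
      = ∫ x in Set.Ioc (0:ℝ) z, ∑' k : ℕ+, x ^ m * trig j ((k:ℝ) * x) / (k:ℝ) ^ j := by
        apply integral_congr_ae; filter_upwards with x; exact hpt x
    _ = ∑' k : ℕ+, ∫ x in Set.Ioc (0:ℝ) z, x ^ m * trig j ((k:ℝ) * x) / (k:ℝ) ^ j :=
        (integral_tsum_of_summable_integral_norm hmeas hsum).symm
    _ = ∑' k : ℕ+, (∫ x in (0:ℝ)..z, x ^ m * trig j ((k:ℝ) * x)) / (k:ℝ) ^ j := by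
        congr 1; ext k
        rw [intervalIntegral.integral_of_le hz, ← integral_div]
end swap

section step
variable {z : ℝ}

lemma stepC {j : ℕ} (hj : 2 ≤ j) (m : ℕ) (hz : 0 ≤ z) :
    ∫ x in (0:ℝ)..z, x ^ m * Cl j x =
      sgn j * (z ^ m * Cl (j+1) z - (0:ℝ) ^ m * Cl (j+1) 0)
        - sgn j * m * ∫ x in (0:ℝ)..z, x ^ (m-1) * Cl (j+1) x := by
  have hj1 : 2 ≤ j + 1 := by omega
  have h1 : HasSum (fun k : ℕ+ => z ^ m * (trig (j+1) ((k:ℝ) * z) / (k:ℝ) ^ (j+1)))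
      (z ^ m * Cl (j+1) z) := (hasSum_Cl hj1 z).mul_left _
  have h0 : HasSum (fun k : ℕ+ => (0:ℝ) ^ m * (trig (j+1) ((k:ℝ) * 0) / (k:ℝ) ^ (j+1)))
      ((0:ℝ) ^ m * Cl (j+1) 0) := (hasSum_Cl hj1 0).mul_left _
  have hI : HasSum (fun k : ℕ+ => (∫ x in (0:ℝ)..z, x ^ (m-1) * trig (j+1) ((k:ℝ) * x)) / (k:ℝ) ^ (j+1))
      (∫ x in (0:ℝ)..z, x ^ (m-1) * Cl (j+1) x) := by
    rw [swapA hj1 (m-1) hz]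
    exact (summable_T hj1 hz).hasSum
  have hcomb := ((h1.sub h0).mul_left (sgn j)).sub (hI.mul_left (sgn j * m))
  rw [swapA hj m hz]
  have hfun : (fun k : ℕ+ => (∫ x in (0:ℝ)..z, x ^ m * trig j ((k:ℝ) * x)) / (k:ℝ) ^ j) =
      (fun k : ℕ+ => sgn j * (z ^ m * (trig (j+1) ((k:ℝ) * z) / (k:ℝ) ^ (j+1)) -
          (0:ℝ) ^ m * (trig (j+1) ((k:ℝ) * 0) / (k:ℝ) ^ (j+1))) -
        sgn j * m * ((∫ x in (0:ℝ)..z, x ^ (m-1) * trig (j+1) ((k:ℝ) * x)) / (k:ℝ) ^ (j+1))) := by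
    funext k
    have hk0 : ((k:ℕ):ℝ) ≠ 0 := Nat.cast_ne_zero.2 k.ne_zero
    have hkj : ((k:ℕ):ℝ) ^ j ≠ 0 := pow_ne_zero _ hk0
    by_cases hE : Even j
    · have hE1 : ¬ Even (j+1) := by simp [Nat.even_add_one, hE]
      have hsgn : sgn j = -1 := if_pos hE
      simp only [trig, if_pos hE, if_neg hE1, hsgn]
      rw [partsS m hk0 z, mul_zero, Real.cos_zero]
      field_simp
      ring
    · have hE1 : Even (j+1) := Nat.even_add_one.2 hE
      have hsgn : sgn j = 1 := if_neg hE
      simp only [trig, if_neg hE, if_pos hE1, hsgn]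
      rw [partsC m hk0 z, mul_zero, Real.sin_zero]
      field_simp
      ring
  rw [hfun]
  exact hcomb.tsum_eq
end step

lemma lemE {z : ℝ} (hz : 0 ≤ z) : ∀ m : ℕ, ∀ j : ℕ, 2 ≤ j →
    ∫ x in (0:ℝ)..z, x ^ m * Cl j x =
      (∑ i ∈ Finset.range (m+1),
        ee j i * ((m.factorial : ℝ) / ((m-i).factorial : ℝ)) * Cl (j+1+i) z * z ^ (m-i))
        - ee j m * (m.factorial : ℝ) * Cl (j+1+m) 0 := by
  intro m
  induction m with
  | zero =>
    intro j hj
    rw [stepC hj 0 hz]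
    simp only [zero_add, Finset.sum_range_one, Nat.sub_zero, Nat.factorial_zero, pow_zero,
      Nat.cast_one, Nat.cast_zero, Nat.add_zero]
    show _ = ee j 0 * (1/1) * Cl (j+1) z * 1 - ee j 0 * 1 * Cl (j+1) 0
    show sgn j * (1 * Cl (j+1) z - 1 * Cl (j+1) 0) - sgn j * 0 * _ = sgn j * (1/1) * Cl (j+1) z * 1 - sgn j * 1 * Cl (j+1) 0
    ring
  | succ m ih =>
    intro j hj
    have hj1 : 2 ≤ j + 1 := by omega
    rw [stepC hj (m+1) hz, Nat.add_sub_cancel, ih (j+1) hj1]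
    conv_rhs => rw [Finset.sum_range_succ']
    have hcast : (((m+1).factorial : ℕ) : ℝ) = (m+1) * (m.factorial : ℝ) := by
      rw [Nat.factorial_succ]; push_cast; ring
    have hterm : ∀ i ∈ Finset.range (m+1),
        ee j (i+1) * (((m+1).factorial : ℝ)/(((m+1-(i+1)).factorial : ℕ) : ℝ)) * Cl (j+1+(i+1)) z * z^(m+1-(i+1))
          = (-(sgn j) * (m+1)) * (ee (j+1) i * ((m.factorial : ℝ)/(((m-i).factorial : ℕ) : ℝ)) * Cl (j+1+1+i) z * z^(m-i)) := by
      intro i _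
      have h1 : m+1-(i+1) = m - i := by omega
      have h2 : j+1+(i+1) = j+1+1+i := by omega
      rw [h1, h2, hcast, show ee j (i+1) = -(sgn j) * ee (j+1) i from rfl]
      ring
    rw [Finset.sum_congr rfl hterm, ← Finset.mul_sum]
    have hf0 : ee j 0 * (((m+1).factorial : ℝ)/(((m+1-0).factorial : ℕ) : ℝ)) * Cl (j+1+0) z * z^(m+1-0)
        = sgn j * Cl (j+1) z * z^(m+1) := by
      rw [show ee j 0 = sgn j from rfl, Nat.sub_zero, div_self (by exact_mod_cast (m+1).factorial_ne_zero), Nat.add_zero]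
      ring
    rw [hf0]
    have hb : ee j (m+1) * (((m+1).factorial : ℕ) : ℝ) * Cl (j+1+(m+1)) 0
        = -(sgn j) * ee (j+1) m * ((m+1) * (m.factorial : ℝ)) * Cl (j+1+1+m) 0 := by
      have h2 : j+1+(m+1) = j+1+1+m := by omega
      rw [h2, hcast, show ee j (m+1) = -(sgn j) * ee (j+1) m from rfl]
    rw [hb, zero_pow (Nat.succ_ne_zero m)]
    push_cast
    ring


lemma sin_sq_half' (x : ℝ) : Real.sin (x/2)^2 = (1 - Real.cos x)/2 := by
  have h2 : Real.cos x = Real.cos (2 * (x/2)) := by congr 1; ring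
  rw [h2, Real.cos_two_mul]
  have := Real.sin_sq_add_cos_sq (x/2)
  nlinarith

lemma bound_T' {z : ℝ} (n : ℕ) (hz : 0 ≤ z) {k : ℕ+} :
    |(∫ x in (0:ℝ)..z, x ^ n * Real.cos ((k:ℝ) * x))| ≤ (z^n * 1 + n * (z^(n-1)*z)) / (k:ℝ) := by
  have hk1 : (1:ℝ) ≤ (k:ℝ) := by exact_mod_cast k.one_le
  have hk0 : (0:ℝ) < (k:ℝ) := by linarith
  rw [partsC n (ne_of_gt hk0) z]
  have h1 : |z ^ n * Real.sin ((k:ℝ) * z) / (k:ℝ)| ≤ z^n / (k:ℝ) := by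
    rw [abs_div, abs_of_pos hk0, abs_mul, abs_pow, abs_of_nonneg hz]
    apply div_le_div_of_nonneg_right _ hk0.le
    nlinarith [Real.abs_sin_le_one ((k:ℝ)*z), pow_nonneg hz n, abs_nonneg (Real.sin ((k:ℝ)*z))]
  have h2 : |(n : ℝ) / (k:ℝ) * ∫ x in (0:ℝ)..z, x ^ (n-1) * Real.sin ((k:ℝ) * x)|
      ≤ (n : ℝ) * (z^(n-1)*z) / (k:ℝ) := by
    rw [abs_mul, abs_div, abs_of_pos hk0, Nat.abs_cast]
    have hb : |∫ x in (0:ℝ)..z, x ^ (n-1) * Real.sin ((k:ℝ) * x)| ≤ z^(n-1) * z := by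
      have := bound_T (z := z) (j := 2) (n-1) hz (k:ℝ)
      simpa [trig, if_pos even_two] using this
    calc (n:ℝ)/(k:ℝ) * |∫ x in (0:ℝ)..z, x ^ (n-1) * Real.sin ((k:ℝ) * x)|
        ≤ (n:ℝ)/(k:ℝ) * (z^(n-1)*z) := by
          apply mul_le_mul_of_nonneg_left hb (by positivity)
      _ = (n : ℝ) * (z^(n-1)*z) / (k:ℝ) := by ring
  calc |z ^ n * Real.sin ((k:ℝ) * z) / (k:ℝ) - (n : ℝ) / (k:ℝ) * ∫ x in (0:ℝ)..z, x ^ (n-1) * Real.sin ((k:ℝ) * x)|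
      ≤ |z ^ n * Real.sin ((k:ℝ) * z) / (k:ℝ)| + |(n : ℝ) / (k:ℝ) * ∫ x in (0:ℝ)..z, x ^ (n-1) * Real.sin ((k:ℝ) * x)| := abs_sub _ _
    _ ≤ z^n / (k:ℝ) + (n : ℝ) * (z^(n-1)*z) / (k:ℝ) := add_le_add h1 h2
    _ = (z^n * 1 + n * (z^(n-1)*z)) / (k:ℝ) := by ring

lemma base_swap {z : ℝ} (n : ℕ) (hz0 : 0 ≤ z) (hz1 : z ≤ 2*π) :
    ∫ x in (0:ℝ)..z, x ^ n * Real.log (2 * Real.sin (x/2)) =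
      - ∑' k : ℕ+, (∫ x in (0:ℝ)..z, x ^ n * Real.cos ((k:ℝ) * x)) / (k:ℝ) := by
  have hπ := Real.pi_pos
  set T : ℕ+ → ℝ := fun k => ∫ x in (0:ℝ)..z, x ^ n * Real.cos ((k:ℝ) * x) with hT
  set C : ℝ := z^n * 1 + n * (z^(n-1)*z) with hC
  have hC0 : 0 ≤ C := by have := pow_nonneg hz0 n; have := pow_nonneg hz0 (n-1); positivity
  set F : ℝ → ℝ → ℝ := fun r x => x^n * (-(1/2) * Real.log (1 - 2*r*Real.cos x + r^2)) with hF
  set μ : Measure ℝ := volume.restrict (Set.Ioc (0:ℝ) z) with hμ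
  -- a.e. membership in Ioo 0 2π
  have hae : ∀ᵐ x ∂μ, x ∈ Set.Ioo (0:ℝ) (2*π) := by
    have h1 : ∀ᵐ x ∂μ, x ∈ Set.Ioc (0:ℝ) z := ae_restrict_mem measurableSet_Ioc
    have h2 : ∀ᵐ (x:ℝ) ∂volume, x ≠ 2*π := by
      have h0 : (volume : Measure ℝ) {(2*π:ℝ)} = 0 := Real.volume_singleton
      rw [ae_iff]
      simpa using h0
    filter_upwards [h1, ae_restrict_of_ae h2] with x hx hne
    exact ⟨hx.1, lt_of_le_of_ne (hx.2.trans hz1) hne⟩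
  -- argument bounds
  have harg : ∀ r ∈ Set.Ico (1/2:ℝ) 1, ∀ x : ℝ,
      1 - 2*r*Real.cos x + r^2 = (1-r)^2 + 4*r*(Real.sin (x/2))^2 := by
    intro r _ x
    have := sin_sq_half' x
    nlinarith
  -- bound on F r
  have hFb : ∀ r ∈ Set.Ico (1/2:ℝ) 1, ∀ x ∈ Set.Ioo (0:ℝ) (2*π), x ≤ z →
      ‖F r x‖ ≤ (2*π)^n * Dom x := by
    intro r hr x hx hxz
    have hx0 := hx.1
    have hu1 : 2 * Real.sin (x/2)^2 ≤ 1 - 2*r*Real.cos x + r^2 := by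
      rw [harg r hr x]
      nlinarith [sq_nonneg (1-r), hr.1, sq_nonneg (Real.sin (x/2))]
    have hu2 : 1 - 2*r*Real.cos x + r^2 ≤ 5 := by
      rw [harg r hr x]
      nlinarith [hr.1, hr.2.le, Real.neg_one_le_sin (x/2), Real.sin_le_one (x/2), sq_nonneg (1-r)]
    have hlog := abs_log_le_Dom hx hu1 hu2
    rw [hF]
    simp only [Real.norm_eq_abs, abs_mul]
    have h1 : |x^n| ≤ (2*π)^n := by
      rw [abs_pow, abs_of_pos hx0]
      exact pow_le_pow_left₀ hx0.le (by linarith [hx.2]) n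
    have h2 : |(-(1/2) : ℝ)| * |Real.log (1 - 2*r*Real.cos x + r^2)| ≤ Dom x := by
      rw [abs_neg, show |((1:ℝ)/2)| = 1/2 by norm_num]
      linarith
    exact mul_le_mul h1 h2 (by positivity) (by positivity)
  -- measurability
  have hFmeas : ∀ r : ℝ, AEStronglyMeasurable (F r) μ := by
    intro r
    apply Measurable.aestronglyMeasurable
    apply Measurable.mul (measurable_id.pow_const n)
    apply Measurable.const_mul
    exact Real.measurable_log.comp (by fun_prop)
  -- bound integrable
  have hbint : Integrable (fun x => (2*π)^n * Dom x) μ := by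
    have := (intervalIntegrable_Dom hz0 hz1).1
    exact (this.const_mul _)
  -- pointwise limit
  have hlim : ∀ᵐ x ∂μ, Filter.Tendsto (fun r => F r x) (nhdsWithin 1 (Set.Iio 1))
      (nhds (-(x^n * Real.log (2 * Real.sin (x/2))))) := by
    filter_upwards [hae] with x hx
    have hsin : 0 < Real.sin (x/2) :=
      Real.sin_pos_of_pos_of_lt_pi (by linarith [hx.1]) (by linarith [hx.2])
    have hval : 2 - 2*Real.cos x = (2*Real.sin (x/2))^2 := by
      have := sin_sq_half' x; nlinarith
    have hne : (2 - 2*Real.cos x) ≠ 0 := by rw [hval]; positivity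
    have hcont : Filter.Tendsto (fun r : ℝ => 1 - 2*r*Real.cos x + r^2) (nhdsWithin 1 (Set.Iio 1))
        (nhds (2 - 2*Real.cos x)) := by
      have hc : Continuous (fun r : ℝ => 1 - 2*r*Real.cos x + r^2) := by fun_prop
      have := (hc.tendsto 1).mono_left (nhdsWithin_le_nhds (s := Set.Iio (1:ℝ)))
      convert this using 2
      ring
    have hlog : Filter.Tendsto (fun r : ℝ => Real.log (1 - 2*r*Real.cos x + r^2))
        (nhdsWithin 1 (Set.Iio 1)) (nhds (Real.log (2 - 2*Real.cos x))) :=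
      (Real.continuousAt_log hne).tendsto.comp hcont
    have heq : -(x^n * Real.log (2 * Real.sin (x/2))) =
        x^n * (-(1/2) * Real.log (2 - 2*Real.cos x)) := by
      rw [hval, show ((2*Real.sin (x/2))^2 : ℝ) = (2*Real.sin (x/2))^(2:ℕ) by norm_num,
        Real.log_pow]
      push_cast; ring
    rw [heq]
    exact (hlog.const_mul (-(1/2):ℝ)).const_mul (x^n)
  -- DCT
  have hDCT : Filter.Tendsto (fun r => ∫ x, F r x ∂μ) (nhdsWithin 1 (Set.Iio 1))
      (nhds (∫ x, -(x^n * Real.log (2 * Real.sin (x/2))) ∂μ)) := by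
    apply MeasureTheory.tendsto_integral_filter_of_dominated_convergence
      (bound := fun x => (2*π)^n * Dom x)
    · exact Filter.Eventually.of_forall hFmeas
    · apply Filter.eventually_of_mem (Ico_mem_nhdsLT_of_mem (by norm_num : (1:ℝ) ∈ Set.Ioc (1/2) 1))
      intro r hr
      filter_upwards [hae, ae_restrict_mem measurableSet_Ioc] with x hx hx2
      exact hFb r hr x hx hx2.2
    · exact hbint
    · exact hlim
  -- swap: for each r in Ico, the integral is a tsum
  have hswap : ∀ r ∈ Set.Ico (1/2:ℝ) 1, (∫ x, F r x ∂μ) = ∑' k : ℕ+, r ^ (k:ℕ) * T k / (k:ℝ) := by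
    intro r hr
    have hr0 : (0:ℝ) ≤ r := by linarith [hr.1]
    have hr1 : r < 1 := hr.2
    have hpt : ∀ x : ℝ, F r x = ∑' k : ℕ+, x^n * (r ^ (k:ℕ) * Real.cos ((k:ℝ) * x) / (k:ℝ)) := by
      intro x
      rw [hF]
      simp only
      rw [← (hasSum_poisson hr0 hr1 x).tsum_eq, ← tsum_mul_left]
    have hint : ∀ k : ℕ+, Integrable (fun x : ℝ => x^n * (r ^ (k:ℕ) * Real.cos ((k:ℝ) * x) / (k:ℝ))) μ := by
      intro k
      apply Continuous.integrableOn_Ioc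
      fun_prop
    have hsum : Summable (fun k : ℕ+ => ∫ x, ‖x^n * (r ^ (k:ℕ) * Real.cos ((k:ℝ) * x) / (k:ℝ))‖ ∂μ) := by
      have hgeom : Summable (fun k : ℕ+ => z^n * z * r ^ (k:ℕ)) :=
        ((summable_geometric_of_lt_one hr0 hr1).mul_left (z^n * z)).comp_injective PNat.coe_injective
      apply hgeom.of_nonneg_of_le (fun k => integral_nonneg (fun x => norm_nonneg _))
      intro k
      have hk1 : (1:ℝ) ≤ (k:ℝ) := by exact_mod_cast k.one_le
      have hbd : ∀ x ∈ Set.Ioc (0:ℝ) z, ‖x^n * (r ^ (k:ℕ) * Real.cos ((k:ℝ) * x) / (k:ℝ))‖ ≤ z^n * r ^ (k:ℕ) := by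
        intro x hx
        rw [Real.norm_eq_abs, abs_mul, abs_div, abs_mul]
        have h1 : |x^n| ≤ z^n := by
          rw [abs_pow, abs_of_pos hx.1]
          exact pow_le_pow_left₀ hx.1.le hx.2 n
        have h2 : |r ^ (k:ℕ)| * |Real.cos ((k:ℝ)*x)| / |(k:ℝ)| ≤ r ^ (k:ℕ) := by
          rw [abs_of_nonneg (pow_nonneg hr0 _), abs_of_pos (by linarith : (0:ℝ) < (k:ℝ))]
          have hcos := Real.abs_cos_le_one ((k:ℝ)*x)
          have : r ^ (k:ℕ) * |Real.cos ((k:ℝ)*x)| / (k:ℝ) ≤ r ^ (k:ℕ) * 1 / 1 := by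
            apply div_le_div₀ (by positivity) _ (by norm_num) hk1
            exact mul_le_mul_of_nonneg_left hcos (pow_nonneg hr0 _)
          simpa using this
        exact mul_le_mul h1 h2 (by positivity) (pow_nonneg hz0 n)
      calc (∫ x, ‖x^n * (r ^ (k:ℕ) * Real.cos ((k:ℝ) * x) / (k:ℝ))‖ ∂μ)
          ≤ ∫ _x, z^n * r ^ (k:ℕ) ∂μ := by
            apply setIntegral_mono_on (hint k).norm
              (integrableOn_const (by simp [Real.volume_Ioc]))
              measurableSet_Ioc hbd
        _ = z^n * r ^ (k:ℕ) * (volume (Set.Ioc (0:ℝ) z)).toReal := by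
            rw [integral_const, hμ, measureReal_restrict_apply_univ, smul_eq_mul, Measure.real]
            ring
        _ = z^n * z * r ^ (k:ℕ) := by
            rw [Real.volume_Ioc, ENNReal.toReal_ofReal (by linarith), sub_zero]
            ring
    calc (∫ x, F r x ∂μ) = ∫ x, ∑' k : ℕ+, x^n * (r ^ (k:ℕ) * Real.cos ((k:ℝ) * x) / (k:ℝ)) ∂μ := by
          apply integral_congr_ae
          filter_upwards with x
          exact hpt x
      _ = ∑' k : ℕ+, ∫ x, x^n * (r ^ (k:ℕ) * Real.cos ((k:ℝ) * x) / (k:ℝ)) ∂μ :=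
          (integral_tsum_of_summable_integral_norm hint hsum).symm
      _ = ∑' k : ℕ+, r ^ (k:ℕ) * T k / (k:ℝ) := by
          congr 1
          ext k
          have : ∀ x : ℝ, x^n * (r ^ (k:ℕ) * Real.cos ((k:ℝ) * x) / (k:ℝ)) =
              (r ^ (k:ℕ) / (k:ℝ)) * (x^n * Real.cos ((k:ℝ) * x)) := fun x => by ring
          simp only [this]
          rw [integral_const_mul, hμ, ← intervalIntegral.integral_of_le hz0]
          rw [hT]
          ring
  -- limit of the sums
  have hsumlim : Filter.Tendsto (fun r : ℝ => ∑' k : ℕ+, r ^ (k:ℕ) * T k / (k:ℝ))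
      (nhdsWithin 1 (Set.Iio 1)) (nhds (∑' k : ℕ+, T k / (k:ℝ))) := by
    apply tendsto_tsum_of_dominated_convergence (bound := fun k : ℕ+ => C / (k:ℝ)^2)
    · have h : Summable (fun k : ℕ => C / (k:ℝ)^2) := by
        apply Summable.mul_left C
        simpa [div_eq_mul_inv, one_div] using
          (Real.summable_one_div_nat_pow.2 (le_refl 2))
      exact h.comp_injective PNat.coe_injective
    · intro k
      have : Filter.Tendsto (fun r : ℝ => r ^ (k:ℕ)) (nhdsWithin 1 (Set.Iio 1)) (nhds 1) := by
        have := ((continuous_pow (k:ℕ)).tendsto (1:ℝ)).mono_left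
          (nhdsWithin_le_nhds (s := Set.Iio (1:ℝ)))
        simpa using this
      simpa using (this.mul_const (T k)).div_const ((k:ℝ))
    · apply Filter.eventually_of_mem (Ico_mem_nhdsLT_of_mem (by norm_num : (1:ℝ) ∈ Set.Ioc 0 1))
      intro r hr k
      have hk1 : (1:ℝ) ≤ (k:ℝ) := by exact_mod_cast k.one_le
      have hk0 : (0:ℝ) < (k:ℝ) := by linarith
      have hTb := bound_T' n hz0 (k := k)
      rw [Real.norm_eq_abs, abs_div, abs_mul, abs_of_pos hk0,
        abs_of_nonneg (pow_nonneg hr.1 (k:ℕ))]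
      have hr1 : r ^ (k:ℕ) ≤ 1 := pow_le_one₀ hr.1 hr.2.le
      have hmul : r ^ (k:ℕ) * |T k| ≤ C / (k:ℝ) := by
        calc r ^ (k:ℕ) * |T k| ≤ 1 * (C / (k:ℝ)) :=
              mul_le_mul hr1 hTb (abs_nonneg _) (by norm_num)
          _ = C / (k:ℝ) := one_mul _
      calc r ^ (k:ℕ) * |T k| / (k:ℝ) ≤ (C / (k:ℝ)) / (k:ℝ) := by
            apply div_le_div_of_nonneg_right hmul hk0.le
        _ = C / (k:ℝ)^2 := by rw [div_div, ← pow_two]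
  -- conclude
  have hLR : (fun r => ∫ x, F r x ∂μ) =ᶠ[nhdsWithin 1 (Set.Iio 1)]
      (fun r : ℝ => ∑' k : ℕ+, r ^ (k:ℕ) * T k / (k:ℝ)) := by
    apply Filter.eventually_of_mem (Ico_mem_nhdsLT_of_mem (by norm_num : (1:ℝ) ∈ Set.Ioc (1/2) 1))
    intro r hr
    exact hswap r hr
  have hfinal := tendsto_nhds_unique (hDCT.congr' hLR) hsumlim
  have hI : (∫ x, -(x^n * Real.log (2 * Real.sin (x/2))) ∂μ) =
      -∫ x in (0:ℝ)..z, x ^ n * Real.log (2 * Real.sin (x/2)) := by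
    rw [integral_neg, hμ, ← intervalIntegral.integral_of_le hz0]
  rw [hI] at hfinal
  have : ∑' k : ℕ+, T k / (k:ℝ) = ∑' k : ℕ+, (∫ x in (0:ℝ)..z, x ^ n * Real.cos ((k:ℝ) * x)) / (k:ℝ) := rfl
  rw [← this]
  linarith [hfinal]


lemma baseCl {z : ℝ} (n : ℕ) (hz0 : 0 ≤ z) (hz1 : z ≤ 2*π) :
    ∫ x in (0:ℝ)..z, x ^ n * Real.log (2 * Real.sin (x/2)) =
      -(z ^ n * Cl 2 z) + n * ∫ x in (0:ℝ)..z, x ^ (n-1) * Cl 2 x := by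
  rw [base_swap n hz0 hz1]
  have h1 : HasSum (fun k : ℕ+ => z ^ n * (trig 2 ((k:ℝ) * z) / (k:ℝ) ^ 2)) (z ^ n * Cl 2 z) :=
    (hasSum_Cl le_rfl z).mul_left _
  have hI : HasSum (fun k : ℕ+ =>
      (n:ℝ) * ((∫ x in (0:ℝ)..z, x ^ (n-1) * trig 2 ((k:ℝ) * x)) / (k:ℝ) ^ 2))
      ((n:ℝ) * ∫ x in (0:ℝ)..z, x ^ (n-1) * Cl 2 x) := by
    have h := (summable_T (z := z) (j:=2) (j':=2) (q:=n-1) le_rfl hz0).hasSum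
    rw [← swapA le_rfl (n-1) hz0] at h
    exact h.mul_left _
  have hcomb := h1.sub hI
  have hfun : (fun k : ℕ+ => (∫ x in (0:ℝ)..z, x ^ n * Real.cos ((k:ℝ) * x)) / (k:ℝ)) =
      (fun k : ℕ+ => z ^ n * (trig 2 ((k:ℝ) * z) / (k:ℝ) ^ 2) -
        (n:ℝ) * ((∫ x in (0:ℝ)..z, x ^ (n-1) * trig 2 ((k:ℝ) * x)) / (k:ℝ) ^ 2)) := by
    funext k
    have hk0 : ((k:ℕ):ℝ) ≠ 0 := Nat.cast_ne_zero.2 k.ne_zero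
    simp only [trig, if_pos even_two]
    rw [partsC n hk0 z]
    field_simp
  rw [hfun, hcomb.tsum_eq]
  ring

theorem logsine_even_moment (p : ℕ) (z : ℝ) (hz0 : 0 ≤ z) (hz1 : z ≤ 2 * π) :
    ∫ x in (0:ℝ)..z, x ^ (2 * p) * Real.log (2 * Real.sin (x / 2)) =
      -(2 * p).factorial *
        ∑ i ∈ Finset.range (2 * p + 1),
          (-1 : ℝ) ^ (i + (i + 1) / 2) / (2 * p - i).factorial *
            Cl (i + 2) z * z ^ (2 * p - i) := by
  rw [baseCl (2*p) hz0 hz1]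
  rcases Nat.eq_zero_or_pos p with rfl | hp
  · simp
  -- p ≥ 1
  have h2p : 1 ≤ 2*p := by omega
  have hm : 2*p - 1 + 1 = 2*p := by omega
  rw [lemE hz0 (2*p-1) 2 le_rfl, hm]
  -- boundary term vanishes
  have hbz : Cl (2+1+(2*p-1)) 0 = 0 := by
    have : 2+1+(2*p-1) = 2*p+2 := by omega
    rw [this]
    exact Cl_zero_even ⟨p+1, by ring⟩
  rw [hbz, mul_zero, sub_zero]
  conv_rhs => rw [Finset.sum_range_succ']
  have hfactN : (2*p).factorial = (2*p) * (2*p-1).factorial := by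
    conv_lhs => rw [show 2*p = 2*p-1+1 by omega, Nat.factorial_succ]
    rw [hm]
  have hfact : (((2*p).factorial : ℕ) : ℝ) = (2*p) * (((2*p-1).factorial : ℕ) : ℝ) := by
    exact_mod_cast hfactN
  have hf1 : (((2*p-1).factorial : ℕ) : ℝ) ≠ 0 := by
    exact_mod_cast (2*p-1).factorial_ne_zero
  have hf2 : (((2*p).factorial : ℕ) : ℝ) ≠ 0 := by
    exact_mod_cast (2*p).factorial_ne_zero
  have hterm : ∀ i ∈ Finset.range (2*p),
      (-1 : ℝ) ^ ((i+1) + ((i+1) + 1) / 2) / ((2 * p - (i+1)).factorial : ℝ) *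
          Cl ((i+1) + 2) z * z ^ (2 * p - (i+1))
        = -(1 / (((2*p-1).factorial : ℕ) : ℝ)) *
            (ee 2 i * (((2*p-1).factorial : ℕ) / (((2*p-1-i).factorial : ℕ) : ℝ)) *
              Cl (2+1+i) z * z ^ (2*p-1-i)) := by
    intro i hi
    have hsub : 2*p - (i+1) = 2*p-1-i := by omega
    have hidx : (i+1)+2 = 2+1+i := by omega
    have hee : ee 2 i = (-1:ℝ)^(i + i/2 + 1) := (ee_two_three i).1
    have hsign : (-1 : ℝ) ^ ((i+1) + ((i+1) + 1) / 2) = -(-1:ℝ)^(i + i/2 + 1) := by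
      rw [show -(-1:ℝ)^(i + i/2 + 1) = (-1:ℝ)^(i + i/2 + 1 + 1) from by rw [pow_succ]; ring]
      exact neg_one_pow_congr' (by omega)
    rw [hsub, hidx, hee, hsign]
    field_simp
  rw [Finset.sum_congr rfl hterm, ← Finset.mul_sum]
  have hsimp0 : (-1:ℝ) ^ (0 + (0+1)/2) / (((2*p - 0).factorial : ℕ) : ℝ) * Cl (0+2) z * z^(2*p-0)
      = 1 / (((2*p).factorial : ℕ) : ℝ) * Cl 2 z * z^(2*p) := by norm_num
  rw [hsimp0, hfact]
  field_simp
  push_cast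
  ring_nf
  congr 3
  exact Finset.sum_congr rfl (fun x _ => by ring)
end

section
/- For every natural number M and every real number x with 0 ≤ x ≤ π, the moment integral I(M, x) = ∫₀ˣ t^M · log|sin t| dt satisfies I(M, x) = ∑_{i=0}^{M} (−1)^(i+1) · (M! / (M−i)!) · x^(M−i) · Υ^{i+2}(x). -/
open Real MeasureTheory Finset

/-- The iterated log–sine integrals: `Υ 1 x = -log |sin x|` and
`Υ (n+1) x = ∫ t in 0..x, Υ n t` for `n ≥ 1`. -/
noncomputable def Upsilon : ℕ → ℝ → ℝ
  | 0, _ => 0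
  | 1, x => -Real.log |Real.sin x|
  | (n + 2), x => ∫ t in (0:ℝ)..x, Upsilon (n + 1) t

lemma Upsilon_one : Upsilon 1 = fun x => -Real.log |Real.sin x| := rfl

lemma Upsilon_succ (n : ℕ) (x : ℝ) :
    Upsilon (n + 2) x = ∫ t in (0:ℝ)..x, Upsilon (n + 1) t := rfl

lemma Upsilon_zero' (n : ℕ) : Upsilon (n + 2) 0 = 0 := by
  rw [Upsilon_succ, intervalIntegral.integral_same]

/-- `-log u ≤ 2 / √u` for positive `u`. -/
lemma neg_log_le_rpow {u : ℝ} (hu : 0 < u) :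
    -Real.log u ≤ 2 * u ^ (-(1/2) : ℝ) := by
  have h1 : Real.log (u ^ (-(1/2) : ℝ)) ≤ u ^ (-(1/2) : ℝ) - 1 :=
    Real.log_le_sub_one_of_pos (Real.rpow_pos_of_pos hu _)
  rw [Real.log_rpow hu] at h1
  have h2 : (0:ℝ) < u ^ (-(1/2) : ℝ) := Real.rpow_pos_of_pos hu _
  nlinarith

lemma neg_log_sin_le {u : ℝ} (h0 : 0 < u) (h2 : u ≤ π / 2) :
    -Real.log (Real.sin u) ≤ Real.log (π / 2) + 2 * u ^ (-(1/2) : ℝ) := by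
  have hpi : (0:ℝ) < π := Real.pi_pos
  have hs : 2 / π * u ≤ Real.sin u := Real.mul_le_sin h0.le h2
  have hpos : (0:ℝ) < 2 / π * u := by positivity
  have hlog : Real.log (2 / π * u) ≤ Real.log (Real.sin u) :=
    Real.log_le_log hpos hs
  have hmul : Real.log (2 / π * u) = Real.log (2 / π) + Real.log u :=
    Real.log_mul (by positivity) h0.ne'
  have hinv : Real.log (2 / π) = -Real.log (π / 2) := by
    rw [show (2:ℝ) / π = (π / 2)⁻¹ by field_simp, Real.log_inv]
  have := neg_log_le_rpow h0
  nlinarith [hlog, hmul, hinv]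

lemma logabssin_integrable :
    IntervalIntegrable (fun t => Real.log |Real.sin t|) volume 0 π := by
  have hpi : (0:ℝ) < π := Real.pi_pos
  set g : ℝ → ℝ := fun t =>
    Real.log (π / 2) + (2 * t ^ (-(1/2) : ℝ) + 2 * (π - t) ^ (-(1/2) : ℝ)) with hg
  have hg1 : IntervalIntegrable (fun t : ℝ => t ^ (-(1/2) : ℝ)) volume 0 π :=
    intervalIntegral.intervalIntegrable_rpow' (by norm_num)
  have hg2 : IntervalIntegrable (fun t : ℝ => (π - t) ^ (-(1/2) : ℝ)) volume 0 π := by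
    have := (intervalIntegral.intervalIntegrable_rpow'
      (r := (-(1/2) : ℝ)) (a := 0) (b := π) (by norm_num)).comp_sub_left π
    simpa using this.symm
  have hgint : IntervalIntegrable g volume 0 π := by
    apply IntervalIntegrable.add intervalIntegrable_const
    exact ((hg1.const_mul 2).add (hg2.const_mul 2))
  apply hgint.mono_fun'
  · exact ((Real.measurable_log.comp
      (Real.measurable_sin.abs)).aestronglyMeasurable)
  · rw [Filter.EventuallyLE, MeasureTheory.ae_restrict_iff' measurableSet_uIoc]
    filter_upwards with t ht
    rw [Set.uIoc_of_le hpi.le] at ht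
    obtain ⟨ht0, ht1⟩ := ht
    have hlogpi2 : (0:ℝ) ≤ Real.log (π / 2) := by
      apply Real.log_nonneg; nlinarith [Real.pi_gt_three]
    have hrp1 : (0:ℝ) ≤ 2 * t ^ (-(1/2) : ℝ) := by positivity
    have hrp2 : (0:ℝ) ≤ 2 * (π - t) ^ (-(1/2) : ℝ) := by
      have : (0:ℝ) ≤ π - t := by linarith
      positivity
    rcases eq_or_lt_of_le ht1 with rfl | htlt
    · simp only [Real.sin_pi, abs_zero, Real.log_zero, norm_zero, hg]
      positivity
    · have hsinpos : 0 < Real.sin t := Real.sin_pos_of_pos_of_lt_pi ht0 htlt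
      rw [abs_of_pos hsinpos]
      have hsle : Real.sin t ≤ 1 := Real.sin_le_one t
      have hlogle : Real.log (Real.sin t) ≤ 0 := Real.log_nonpos hsinpos.le hsle
      rw [Real.norm_eq_abs, abs_of_nonpos hlogle]
      rcases le_or_gt t (π / 2) with hc | hc
      · have := neg_log_sin_le ht0 hc
        simp only [hg]; linarith
      · have h0' : 0 < π - t := by linarith
        have h2' : π - t ≤ π / 2 := by linarith
        have := neg_log_sin_le h0' h2'
        rw [← Real.sin_pi_sub t] at *
        simp only [hg]; linarith

lemma logabssin_integrable' {a b : ℝ} (ha : a ∈ Set.Icc (0:ℝ) π) (hb : b ∈ Set.Icc (0:ℝ) π) :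
    IntervalIntegrable (fun t => Real.log |Real.sin t|) volume a b := by
  apply logabssin_integrable.mono_set
  rw [Set.uIcc_of_le Real.pi_pos.le]
  exact Set.uIcc_subset_Icc ha hb

lemma upsilon_integrable : ∀ n : ℕ, ∀ a b : ℝ, a ∈ Set.Icc (0:ℝ) π → b ∈ Set.Icc (0:ℝ) π →
    IntervalIntegrable (Upsilon (n + 1)) volume a b := by
  intro n
  induction n with
  | zero =>
    intro a b ha hb
    rw [Upsilon_one]
    exact (logabssin_integrable' ha hb).neg
  | succ m ih =>
    intro a b ha hb
    have hcont : ContinuousOn (Upsilon (m + 2)) (Set.Icc 0 π) := by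
      have h1 : IntervalIntegrable (Upsilon (m + 1)) volume 0 π :=
        ih 0 π (Set.left_mem_Icc.2 Real.pi_pos.le) (Set.right_mem_Icc.2 Real.pi_pos.le)
      have := intervalIntegral.continuousOn_primitive_interval
        (a := 0) (b := π) (f := Upsilon (m + 1)) (μ := volume) ?_
      · rw [Set.uIcc_of_le Real.pi_pos.le] at this
        exact this
      · rw [Set.uIcc_of_le Real.pi_pos.le]
        exact (intervalIntegrable_iff_integrableOn_Icc_of_le Real.pi_pos.le).1 h1
    exact ContinuousOn.intervalIntegrable (hcont.mono (Set.uIcc_subset_Icc ha hb))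

lemma upsilon_continuousOn (n : ℕ) : ContinuousOn (Upsilon (n + 2)) (Set.Icc 0 π) := by
  have h1 : IntervalIntegrable (Upsilon (n + 1)) volume 0 π :=
    upsilon_integrable n 0 π (Set.left_mem_Icc.2 Real.pi_pos.le)
      (Set.right_mem_Icc.2 Real.pi_pos.le)
  have := intervalIntegral.continuousOn_primitive_interval
    (a := 0) (b := π) (f := Upsilon (n + 1)) (μ := volume) ?_
  · rw [Set.uIcc_of_le Real.pi_pos.le] at this
    exact this
  · rw [Set.uIcc_of_le Real.pi_pos.le]
    exact (intervalIntegrable_iff_integrableOn_Icc_of_le Real.pi_pos.le).1 h1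

lemma upsilon_continuousOn_Ioo (n : ℕ) :
    ContinuousOn (Upsilon (n + 1)) (Set.Ioo 0 π) := by
  cases n with
  | zero =>
    rw [Upsilon_one]
    intro t ht
    have hsinpos : 0 < Real.sin t := Real.sin_pos_of_pos_of_lt_pi ht.1 ht.2
    apply ContinuousAt.continuousWithinAt
    apply ContinuousAt.neg
    exact (Real.continuousAt_log (by positivity)).comp
      (Real.continuous_sin.abs.continuousAt)
  | succ m =>
    exact (upsilon_continuousOn m).mono (Set.Ioo_subset_Icc_self)

lemma upsilon_hasDerivAt (n : ℕ) {y : ℝ} (hy : y ∈ Set.Ioo (0:ℝ) π) :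
    HasDerivAt (Upsilon (n + 2)) (Upsilon (n + 1) y) y := by
  have hInt : IntervalIntegrable (Upsilon (n + 1)) volume 0 y :=
    upsilon_integrable n 0 y (Set.left_mem_Icc.2 Real.pi_pos.le)
      ⟨hy.1.le, hy.2.le⟩
  have hmeas : StronglyMeasurableAtFilter (Upsilon (n + 1)) (nhds y) volume :=
    (upsilon_continuousOn_Ioo n).stronglyMeasurableAtFilter isOpen_Ioo y hy
  have hcont : ContinuousAt (Upsilon (n + 1)) y :=
    (upsilon_continuousOn_Ioo n).continuousAt (Ioo_mem_nhds hy.1 hy.2)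
  have := intervalIntegral.integral_hasDerivAt_right hInt hmeas hcont
  exact this

theorem logsine_moment_by_parts (M : ℕ) (x : ℝ) (hx0 : 0 ≤ x) (hx1 : x ≤ π) :
    ∫ t in (0:ℝ)..x, t ^ M * Real.log |Real.sin t| =
      ∑ i ∈ Finset.range (M + 1),
        (-1 : ℝ) ^ (i + 1) * (M.factorial / (M - i).factorial) *
          x ^ (M - i) * Upsilon (i + 2) x := by
  have hpi : (0:ℝ) < π := Real.pi_pos
  set c : ℕ → ℝ := fun i => (-1 : ℝ) ^ (i + 1) * (M.factorial / (M - i).factorial) with hc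
  set F : ℝ → ℝ := fun y =>
    (∫ t in (0:ℝ)..y, t ^ M * Real.log |Real.sin t|) -
      ∑ i ∈ Finset.range (M + 1), c i * y ^ (M - i) * Upsilon (i + 2) y with hF
  -- integrability of the integrand on [0, π]
  have hfint : ∀ b ∈ Set.Icc (0:ℝ) π,
      IntervalIntegrable (fun t => t ^ M * Real.log |Real.sin t|) volume 0 b := by
    intro b hb
    exact (logabssin_integrable' (Set.left_mem_Icc.2 hpi.le) hb).continuousOn_mul
      (continuous_pow M).continuousOn
  -- continuity of F on Icc 0 x
  have hIccsub : Set.Icc (0:ℝ) x ⊆ Set.Icc (0:ℝ) π := Set.Icc_subset_Icc_right hx1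
  have hFcont : ContinuousOn F (Set.Icc 0 x) := by
    apply ContinuousOn.sub
    · have := intervalIntegral.continuousOn_primitive_interval
        (a := (0:ℝ)) (b := x) (f := fun t => t ^ M * Real.log |Real.sin t|) (μ := volume) ?_
      · rw [Set.uIcc_of_le hx0] at this; exact this
      · rw [Set.uIcc_of_le hx0]
        exact (intervalIntegrable_iff_integrableOn_Icc_of_le hx0).1
          (hfint x ⟨hx0, hx1⟩)
    · apply continuousOn_finset_sum
      intro i _
      exact ((continuousOn_const.mul (continuous_pow (M - i)).continuousOn).mul
        ((upsilon_continuousOn i).mono hIccsub))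
  -- F has derivative 0 on Ioo 0 x
  have hderiv : ∀ y ∈ Set.Ioo (0:ℝ) x, HasDerivAt F 0 y := by
    intro y hy
    have hy' : y ∈ Set.Ioo (0:ℝ) π := ⟨hy.1, lt_of_lt_of_le hy.2 hx1⟩
    -- derivative of the integral part
    have hA : HasDerivAt (fun u => ∫ t in (0:ℝ)..u, t ^ M * Real.log |Real.sin t|)
        (y ^ M * Real.log |Real.sin y|) y := by
      apply intervalIntegral.integral_hasDerivAt_right
        (hfint y ⟨hy'.1.le, hy'.2.le⟩)
      · have hco : ContinuousOn (fun t : ℝ => t ^ M * Real.log |Real.sin t|)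
            (Set.Ioo 0 π) := by
          intro t ht
          have hsinpos : 0 < Real.sin t := Real.sin_pos_of_pos_of_lt_pi ht.1 ht.2
          exact ((continuous_pow M).continuousAt.mul
            (((Real.continuousAt_log (by positivity)).comp
              Real.continuous_sin.abs.continuousAt))).continuousWithinAt
        exact hco.stronglyMeasurableAtFilter isOpen_Ioo y hy'
      · have hsinpos : 0 < Real.sin y := Real.sin_pos_of_pos_of_lt_pi hy'.1 hy'.2
        exact (continuous_pow M).continuousAt.mul
          ((Real.continuousAt_log (by positivity)).comp
            Real.continuous_sin.abs.continuousAt)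
    -- derivative of each summand
    have hB : ∀ i, HasDerivAt (fun u => c i * u ^ (M - i) * Upsilon (i + 2) u)
        (c i * ((M - i : ℕ) * y ^ (M - i - 1)) * Upsilon (i + 2) y +
          c i * y ^ (M - i) * Upsilon (i + 1) y) y := by
      intro i
      exact ((hasDerivAt_pow (M - i) y).const_mul (c i)).mul (upsilon_hasDerivAt i hy')
    have hSum : HasDerivAt
        (fun u => ∑ i ∈ Finset.range (M + 1), c i * u ^ (M - i) * Upsilon (i + 2) u)
        (∑ i ∈ Finset.range (M + 1),
          (c i * ((M - i : ℕ) * y ^ (M - i - 1)) * Upsilon (i + 2) y +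
            c i * y ^ (M - i) * Upsilon (i + 1) y)) y :=
      HasDerivAt.fun_sum (fun i _ => hB i)
    -- the telescoping identity
    have hkey : ∑ i ∈ Finset.range (M + 1),
        (c i * ((M - i : ℕ) * y ^ (M - i - 1)) * Upsilon (i + 2) y +
          c i * y ^ (M - i) * Upsilon (i + 1) y) = y ^ M * Real.log |Real.sin y| := by
      rw [Finset.sum_add_distrib]
      have h1 : ∑ i ∈ Finset.range (M + 1),
          c i * ((M - i : ℕ) * y ^ (M - i - 1)) * Upsilon (i + 2) y =
          ∑ i ∈ Finset.range M, (-(c (i + 1)) * y ^ (M - (i + 1)) * Upsilon (i + 2) y) := by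
        rw [Finset.sum_range_succ]
        simp only [Nat.sub_self, Nat.cast_zero, zero_mul, mul_zero, zero_mul, add_zero]
        apply Finset.sum_congr rfl
        intro i hi
        have hiM : i < M := Finset.mem_range.1 hi
        have hfac : ((M - i : ℕ) : ℝ) * c i = -(c (i + 1)) := by
          have h1 : M - i = (M - (i + 1)) + 1 := by omega
          have h2 : (M - i).factorial = (M - i) * (M - (i + 1)).factorial := by
            conv_lhs => rw [h1]
            rw [Nat.factorial_succ, ← h1]
          have hne : ((M - (i + 1)).factorial : ℝ) ≠ 0 :=
            Nat.cast_ne_zero.2 (Nat.factorial_ne_zero _)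
          have hne2 : ((M - i : ℕ) : ℝ) ≠ 0 := by
            have : 0 < M - i := by omega
            positivity
          simp only [hc, pow_succ]
          rw [h2]
          push_cast
          field_simp
          try ring
        rw [show M - i - 1 = M - (i + 1) by omega]
        calc c i * ((M - i : ℕ) * y ^ (M - (i + 1))) * Upsilon (i + 2) y
            = (((M - i : ℕ) : ℝ) * c i) * y ^ (M - (i + 1)) * Upsilon (i + 2) y := by ring
          _ = -(c (i + 1)) * y ^ (M - (i + 1)) * Upsilon (i + 2) y := by rw [hfac]
      have h2 : ∑ i ∈ Finset.range (M + 1), c i * y ^ (M - i) * Upsilon (i + 1) y =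
          c 0 * y ^ M * Upsilon 1 y +
          ∑ i ∈ Finset.range M, c (i + 1) * y ^ (M - (i + 1)) * Upsilon (i + 2) y := by
        rw [Finset.sum_range_succ']
        simp only [Nat.sub_zero]
        ring
      have hc0 : c 0 = -1 := by
        simp [hc, Nat.sub_zero, div_self (Nat.cast_ne_zero.2 (Nat.factorial_ne_zero M) : (M.factorial : ℝ) ≠ 0)]
      have hU1 : Upsilon 1 y = -Real.log |Real.sin y| := rfl
      have h3 : ∑ i ∈ Finset.range M, -c (i + 1) * y ^ (M - (i + 1)) * Upsilon (i + 2) y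
          = -∑ i ∈ Finset.range M, c (i + 1) * y ^ (M - (i + 1)) * Upsilon (i + 2) y := by
        rw [← Finset.sum_neg_distrib]
        exact Finset.sum_congr rfl fun i _ => by ring
      rw [h1, h2, hc0, hU1, h3]
      ring
    have := hA.sub hSum
    rw [hkey, sub_self] at this
    exact this
  -- conclude via FTC
  have h0 : (∫ y in (0:ℝ)..x, (0:ℝ)) = F x - F 0 := by
    apply intervalIntegral.integral_eq_sub_of_hasDeriv_right_of_le hx0 hFcont
    · intro y hy
      exact (hderiv y hy).hasDerivWithinAt
    · exact intervalIntegrable_const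
  have hF0 : F 0 = 0 := by
    simp only [hF, intervalIntegral.integral_same]
    rw [zero_sub, neg_eq_zero]
    apply Finset.sum_eq_zero
    intro i _
    rw [Upsilon_zero', mul_zero]
  have hFx : F x = 0 := by
    rw [intervalIntegral.integral_zero] at h0
    linarith [h0, hF0]
  have := sub_eq_zero.1 hFx
  simpa only [hF, hc] using this
end

section
/- For every real number x, −∫₀ˣ log|sin t| dt = x · log 2 + (1/2) · ∑_{k=1}^∞ sin(2kx)/k², i.e. Υ²(x) = x·log 2 + Cl₂(2x)/2, where Cl₂(θ) = ∑_{k=1}^∞ sin(kθ)/k² is the Clausen function of order 2. -/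
open Real MeasureTheory Filter Topology Set

namespace UpsilonAux

lemma integrableOn_log_Ioc {c : ℝ} (hc : 0 < c) :
    IntegrableOn Real.log (Set.Ioc 0 c) volume := by
  have hbound : IntervalIntegrable (fun t : ℝ => 2 * t ^ (-(1/2) : ℝ) + |Real.log c|)
      volume 0 c :=
    ((intervalIntegral.intervalIntegrable_rpow' (by norm_num)).const_mul 2).add
      intervalIntegrable_const
  rw [intervalIntegrable_iff_integrableOn_Ioc_of_le hc.le] at hbound
  refine hbound.mono' Real.measurable_log.aestronglyMeasurable.restrict ?_
  rw [ae_restrict_iff' measurableSet_Ioc]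
  refine ae_of_all _ fun t ht => ?_
  obtain ⟨ht0, htc⟩ := ht
  rcases le_or_gt t 1 with h1 | h1
  · have hlt : Real.log t ≤ 0 := Real.log_nonpos ht0.le h1
    have hs : (0:ℝ) < t ^ ((1:ℝ)/2) := Real.rpow_pos_of_pos ht0 _
    have h3 : t ^ (-(1/2) : ℝ) = (t ^ ((1:ℝ)/2))⁻¹ := Real.rpow_neg ht0.le _
    have h2 : Real.log ((t ^ ((1:ℝ)/2))⁻¹) ≤ (t ^ ((1:ℝ)/2))⁻¹ - 1 :=
      Real.log_le_sub_one_of_pos (by positivity)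
    rw [Real.log_inv, Real.log_rpow ht0] at h2
    have key : -Real.log t ≤ 2 * t ^ (-(1/2) : ℝ) := by
      rw [h3]; linarith
    calc ‖Real.log t‖ = -Real.log t := by rw [Real.norm_eq_abs, abs_of_nonpos hlt]
      _ ≤ 2 * t ^ (-(1/2):ℝ) := key
      _ ≤ _ := le_add_of_nonneg_right (abs_nonneg _)
  · have hle : Real.log t ≤ |Real.log c| :=
      le_trans (Real.log_le_log ht0 htc) (le_abs_self _)
    have h0 : 0 ≤ Real.log t := Real.log_nonneg h1.le
    have hrp : (0:ℝ) ≤ 2 * t ^ (-(1/2):ℝ) := by positivity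
    calc ‖Real.log t‖ = Real.log t := by rw [Real.norm_eq_abs, abs_of_nonneg h0]
      _ ≤ |Real.log c| := hle
      _ ≤ _ := le_add_of_nonneg_left hrp

lemma periodic_logabs_sin : Function.Periodic (fun t => Real.log |Real.sin t|) π := by
  intro t
  simp [Real.sin_add_pi]

lemma intInt_logabs_sin_half :
    IntervalIntegrable (fun t => Real.log |Real.sin t|) volume 0 (π/2) := by
  rw [intervalIntegrable_iff_integrableOn_Ioc_of_le (by positivity)]
  have hg : IntegrableOn (fun t : ℝ => |Real.log t| + Real.log (π/2)) (Set.Ioc 0 (π/2))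
      volume :=
    (integrableOn_log_Ioc (by positivity)).abs.add
      (integrableOn_const measure_Ioc_lt_top.ne)
  refine hg.mono' ((Real.measurable_log.comp Real.measurable_sin.abs).aestronglyMeasurable.restrict) ?_
  rw [ae_restrict_iff' measurableSet_Ioc]
  refine ae_of_all _ fun t ht => ?_
  obtain ⟨ht0, htc⟩ := ht
  have habs : |t| ≤ π/2 := by rw [abs_of_pos ht0]; exact htc
  have hsin : 2/π * t ≤ |Real.sin t| := by
    simpa [abs_of_pos ht0] using Real.mul_abs_le_abs_sin habs
  have hsin0 : (0:ℝ) < |Real.sin t| := lt_of_lt_of_le (by positivity) hsin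
  have hsin1 : |Real.sin t| ≤ 1 := abs_le.mpr ⟨Real.neg_one_le_sin t, Real.sin_le_one t⟩
  have hlogs : Real.log |Real.sin t| ≤ 0 := Real.log_nonpos (abs_nonneg _) hsin1
  have h2 : Real.log (2/π * t) ≤ Real.log |Real.sin t| := Real.log_le_log (by positivity) hsin
  have h3 : Real.log (2/π * t) = Real.log 2 - Real.log π + Real.log t := by
    rw [Real.log_mul (by positivity) (ne_of_gt ht0), Real.log_div (by norm_num) Real.pi_ne_zero]
  have h4 : Real.log (π/2) = Real.log π - Real.log 2 :=
    Real.log_div Real.pi_ne_zero (by norm_num)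
  have h5 : -Real.log t ≤ |Real.log t| := neg_le_abs _
  calc ‖Real.log |Real.sin t|‖ = -Real.log |Real.sin t| := by
        rw [Real.norm_eq_abs, abs_of_nonpos hlogs]
    _ ≤ |Real.log t| + Real.log (π/2) := by rw [h4]; linarith

lemma intInt_logabs_sin (a b : ℝ) :
    IntervalIntegrable (fun t => Real.log |Real.sin t|) volume a b := by
  set f : ℝ → ℝ := fun t => Real.log |Real.sin t| with hf
  have h0 : IntervalIntegrable f volume 0 (π/2) := intInt_logabs_sin_half
  have hneg : IntervalIntegrable f volume (-(π/2)) 0 := by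
    have h1 : IntervalIntegrable (fun x => f (-x)) volume (-0) (-(π/2)) :=
      (IntervalIntegrable.iff_comp_neg (f := f) (a := 0) (b := π/2)).mp h0
    have h2 : (fun x => f (-x)) = f := by
      funext x; simp [hf]
    rw [h2, neg_zero] at h1
    exact h1.symm
  have hfull : IntervalIntegrable f volume (-(π/2)) (π/2) := hneg.trans h0
  have hper : ∀ n : ℤ, IntervalIntegrable f volume (-(π/2) + n*π) (π/2 + n*π) := by
    intro n
    have := hfull.comp_sub_right (n*π)
    simpa only [hf, periodic_logabs_sin.sub_int_mul_eq] using this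
  have hN : ∀ n : ℕ, IntervalIntegrable f volume (-(π/2) - n*π) (-(π/2) + n*π) := by
    intro n
    induction n with
    | zero => simp only [Nat.cast_zero, zero_mul, sub_zero, add_zero]; exact IntervalIntegrable.refl (f := f) (μ := volume) (a := -(π/2))
    | succ n ih =>
      have left : IntervalIntegrable f volume (-(π/2) - (n+1:ℕ)*π) (-(π/2) - n*π) := by
        have := hper (-(n+1) : ℤ)
        have e1 : -(π/2) + ((-(n+1):ℤ) : ℝ)*π = -(π/2) - (n+1:ℕ)*π := by push_cast; ring
        have e2 : (π/2) + ((-(n+1):ℤ) : ℝ)*π = -(π/2) - n*π := by push_cast; ring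
        rwa [e1, e2] at this
      have right : IntervalIntegrable f volume (-(π/2) + n*π) (-(π/2) + (n+1:ℕ)*π) := by
        have := hper (n : ℤ)
        have e1 : -(π/2) + ((n:ℤ) : ℝ)*π = -(π/2) + n*π := by push_cast; ring
        have e2 : (π/2) + ((n:ℤ) : ℝ)*π = -(π/2) + (n+1:ℕ)*π := by push_cast; ring
        rwa [e1, e2] at this
      exact (left.trans ih).trans right
  obtain ⟨n, hn⟩ := exists_nat_gt ((|a| + |b| + π)/π)
  have hπ : (0:ℝ) < π := Real.pi_pos
  have hn' : |a| + |b| + π < n * π := by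
    rw [div_lt_iff₀ hπ] at hn; linarith
  refine (hN n).mono_set ?_
  have hAB : -(π/2) - n*π ≤ -(π/2) + n*π := by nlinarith [abs_nonneg a, abs_nonneg b]
  rw [Set.uIcc_of_le hAB]
  refine Set.uIcc_subset_Icc ?_ ?_ <;> constructor
  · nlinarith [abs_nonneg b, neg_abs_le a]
  · nlinarith [abs_nonneg b, le_abs_self a]
  · nlinarith [abs_nonneg a, neg_abs_le b]
  · nlinarith [abs_nonneg a, le_abs_self b]

lemma hasSum_aux {r : ℝ} (hr0 : 0 ≤ r) (hr1 : r < 1) (t : ℝ) :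
    HasSum (fun k : ℕ => r ^ k * Real.cos (2 * k * t) / k)
      (-(1/2) * Real.log (1 - 2*r*Real.cos (2*t) + r^2)) := by
  set z : ℂ := (r : ℂ) * Complex.exp ((2*t : ℝ) * Complex.I) with hz
  have hznorm : ‖z‖ < 1 := by
    rw [hz]
    rw [norm_mul, Complex.norm_real, Real.norm_eq_abs, abs_of_nonneg hr0]
    rw [Complex.norm_exp_ofReal_mul_I, mul_one]
    exact hr1
  have H := (Complex.hasSum_taylorSeries_neg_log hznorm).mapL Complex.reCLM
  have hterm : ∀ n : ℕ, (Complex.reCLM (z ^ n / (n:ℂ))) = r ^ n * Real.cos (2*n*t) / n := by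
    intro n
    have hzn : z ^ n / (n:ℂ) = ((r ^ n / n : ℝ) : ℂ) * Complex.exp (((2*n*t : ℝ)) * Complex.I) := by
      rw [hz, mul_pow, ← Complex.exp_nat_mul]
      push_cast
      ring
    rw [Complex.reCLM_apply, hzn, Complex.re_ofReal_mul, Complex.exp_ofReal_mul_I_re]
    ring
  have hre : z.re = r * Real.cos (2*t) := by
    rw [hz, Complex.re_ofReal_mul, Complex.exp_ofReal_mul_I_re]
  have him : z.im = r * Real.sin (2*t) := by
    rw [hz, Complex.im_ofReal_mul, Complex.exp_ofReal_mul_I_im]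
  have habs2 : ‖1 - z‖ ^ 2 = 1 - 2*r*Real.cos (2*t) + r^2 := by
    rw [Complex.sq_norm, Complex.normSq_apply, Complex.sub_re, Complex.sub_im, Complex.one_re,
      Complex.one_im, hre, him]
    linear_combination (r^2) * Real.sin_sq_add_cos_sq (2*t)
  have hval : Complex.reCLM (-Complex.log (1 - z))
      = -(1/2) * Real.log (1 - 2*r*Real.cos (2*t) + r^2) := by
    rw [Complex.reCLM_apply, Complex.neg_re, Complex.log_re, ← habs2, Real.log_pow]
    push_cast
    ring
  rw [← hval]
  have hfun : (fun k : ℕ => r ^ k * Real.cos (2 * k * t) / k)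
      = fun n : ℕ => Complex.reCLM (z ^ n / (n:ℂ)) := by
    funext n; rw [hterm n]
  rw [hfun]
  exact H

lemma claim_partial (r x : ℝ) (N : ℕ) :
    ∫ t in (0:ℝ)..x, (∑ k ∈ Finset.range N, r^k * Real.cos (2*k*t)/k)
      = ∑ k ∈ Finset.range N, r^k * Real.sin (2*k*x)/(2*k^2) := by
  have hii : ∀ k : ℕ, IntervalIntegrable (fun t => r^k * Real.cos (2*k*t)/k) volume 0 x := by
    intro k
    apply Continuous.intervalIntegrable
    fun_prop
  rw [intervalIntegral.integral_finset_sum (fun k _ => hii k)]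
  refine Finset.sum_congr rfl fun k _ => ?_
  rcases Nat.eq_zero_or_pos k with rfl | hk
  · simp
  · have hk0 : (k:ℝ) ≠ 0 := Nat.cast_ne_zero.mpr hk.ne'
    have h2k : (2*(k:ℝ)) ≠ 0 := by positivity
    have heq : (fun t : ℝ => r^k * Real.cos (2*k*t)/k) = fun t => (r^k/k) * Real.cos ((2*k)*t) := by
      funext t; ring
    rw [heq, intervalIntegral.integral_const_mul]
    rw [intervalIntegral.integral_comp_mul_left (fun u => Real.cos u) h2k]
    simp only [mul_zero, integral_cos, Real.sin_zero, sub_zero, smul_eq_mul]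
    rw [eq_div_iff (by positivity : (2*(k:ℝ)^2) ≠ 0)]
    field_simp

lemma claim1 {r : ℝ} (hr0 : 0 ≤ r) (hr1 : r < 1) (x : ℝ) :
    ∫ t in (0:ℝ)..x, (-(1/2) * Real.log (1 - 2*r*Real.cos (2*t) + r^2))
      = ∑' k : ℕ, r^k * Real.sin (2*k*x)/(2*k^2) := by
  have hsummable : Summable (fun k : ℕ => r^k * Real.sin (2*k*x)/(2*k^2)) := by
    apply Summable.of_norm_bounded (summable_geometric_of_lt_one hr0 hr1)
    intro k
    rcases Nat.eq_zero_or_pos k with rfl | hk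
    · simp
    · have hk1 : (1:ℝ) ≤ k := Nat.one_le_cast.mpr hk
      have h1 : (1:ℝ) ≤ 2*(k:ℝ)^2 := by nlinarith
      rw [Real.norm_eq_abs, abs_div, abs_mul, abs_pow, abs_of_nonneg hr0]
      rw [abs_of_pos (by positivity : (0:ℝ) < 2*(k:ℝ)^2)]
      calc r^k * |Real.sin (2*k*x)| / (2*(k:ℝ)^2) ≤ r^k * 1 / 1 := by
            apply div_le_div₀ (by positivity) ?_ one_pos h1
            exact mul_le_mul_of_nonneg_left (abs_le.mpr ⟨Real.neg_one_le_sin _, Real.sin_le_one _⟩) (by positivity)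
        _ = r^k := by ring
  have hT2 : Tendsto (fun N => ∑ k ∈ Finset.range N, r^k * Real.sin (2*k*x)/(2*k^2)) atTop
      (𝓝 (∑' k : ℕ, r^k * Real.sin (2*k*x)/(2*k^2))) := hsummable.hasSum.tendsto_sum_nat
  have hgeom : ∀ N : ℕ, ∀ t : ℝ, ‖∑ k ∈ Finset.range N, r^k * Real.cos (2*k*t)/k‖ ≤ (1-r)⁻¹ := by
    intro N t
    calc ‖∑ k ∈ Finset.range N, r^k * Real.cos (2*k*t)/k‖
        ≤ ∑ k ∈ Finset.range N, ‖r^k * Real.cos (2*k*t)/k‖ := norm_sum_le _ _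
      _ ≤ ∑ k ∈ Finset.range N, r^k := by
          refine Finset.sum_le_sum fun k _ => ?_
          rcases Nat.eq_zero_or_pos k with rfl | hk
          · simp
          · have hk1 : (1:ℝ) ≤ k := Nat.one_le_cast.mpr hk
            rw [Real.norm_eq_abs, abs_div, abs_mul, abs_pow, abs_of_nonneg hr0, Nat.abs_cast]
            calc r^k * |Real.cos (2*k*t)| / (k:ℝ) ≤ r^k * 1 / 1 := by
                  apply div_le_div₀ (by positivity) ?_ one_pos hk1
                  exact mul_le_mul_of_nonneg_left
                    (abs_le.mpr ⟨Real.neg_one_le_cos _, Real.cos_le_one _⟩) (by positivity)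
              _ = r^k := by ring
      _ ≤ ∑' k : ℕ, r^k :=
          Summable.sum_le_tsum _ (fun k _ => by positivity) (summable_geometric_of_lt_one hr0 hr1)
      _ = (1-r)⁻¹ := tsum_geometric_of_lt_one hr0 hr1
  have hT1 : Tendsto (fun N => ∫ t in (0:ℝ)..x, ∑ k ∈ Finset.range N, r^k * Real.cos (2*k*t)/k)
      atTop (𝓝 (∫ t in (0:ℝ)..x, (-(1/2) * Real.log (1 - 2*r*Real.cos (2*t) + r^2)))) := by
    apply intervalIntegral.tendsto_integral_filter_of_dominated_convergence
      (fun _ => (1-r)⁻¹)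
    · refine Eventually.of_forall fun N => Continuous.aestronglyMeasurable ?_ |>.restrict
      exact continuous_finset_sum _ fun k _ => by fun_prop
    · exact Eventually.of_forall fun N => ae_of_all _ fun t _ => hgeom N t
    · exact intervalIntegrable_const
    · exact ae_of_all _ fun t _ => (hasSum_aux hr0 hr1 t).tendsto_sum_nat
  exact tendsto_nhds_unique (hT1.congr fun N => claim_partial r x N) hT2

lemma ae_sin_ne : ∀ᵐ t : ℝ, Real.sin t ≠ 0 := by
  have hc : {t : ℝ | Real.sin t = 0}.Countable := by
    apply Set.Countable.mono ?_ (Set.countable_range (fun n : ℤ => (n:ℝ) * π))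
    intro t ht
    obtain ⟨n, hn⟩ := Real.sin_eq_zero_iff.mp ht
    exact ⟨n, hn⟩
  rw [ae_iff]
  simp only [ne_eq, not_not]
  exact hc.measure_zero volume

lemma claim2 (x : ℝ) :
    Tendsto (fun r => ∫ t in (0:ℝ)..x, (-(1/2) * Real.log (1 - 2*r*Real.cos (2*t) + r^2)))
      (𝓝[<] (1:ℝ))
      (𝓝 (∫ t in (0:ℝ)..x, (-Real.log 2 - Real.log |Real.sin t|))) := by
  have hev : ∀ᶠ r in 𝓝[<] (1:ℝ), r ∈ Set.Ico (1/2 : ℝ) 1 :=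
    Ico_mem_nhdsLT_of_mem (by norm_num : (1:ℝ) ∈ Set.Ioc (1/2:ℝ) 1)
  apply intervalIntegral.tendsto_integral_filter_of_dominated_convergence
    (fun t => Real.log 2 - Real.log |Real.sin t|)
  · filter_upwards [hev] with r hr
    have hQ : ∀ t : ℝ, 1 - 2*r*Real.cos (2*t) + r^2 ≠ 0 := by
      intro t
      have h1 : Real.cos (2*t) ≤ 1 := Real.cos_le_one _
      have : 0 < 1 - 2*r*Real.cos (2*t) + r^2 := by nlinarith [hr.1, hr.2]
      exact this.ne'
    exact (Continuous.aestronglyMeasurable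
      (continuous_const.mul ((by fun_prop : Continuous fun t : ℝ =>
        1 - 2*r*Real.cos (2*t) + r^2).log hQ))).restrict
  · filter_upwards [hev] with r hr
    filter_upwards [ae_sin_ne] with t ht _
    have hs2 : 0 < Real.sin t ^ 2 := by positivity
    have hQ1 : Real.sin t ^ 2 ≤ 1 - 2*r*Real.cos (2*t) + r^2 := by
      nlinarith [Real.cos_two_mul t, Real.sin_sq_add_cos_sq t, hr.1, hr.2, sq_nonneg (1-r),
        sq_nonneg (Real.sin t)]
    have hQ2 : 1 - 2*r*Real.cos (2*t) + r^2 ≤ 4 := by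
      nlinarith [Real.neg_one_le_cos (2*t), hr.1, hr.2]
    have hlog1 : Real.log (Real.sin t ^ 2) ≤ Real.log (1 - 2*r*Real.cos (2*t) + r^2) :=
      Real.log_le_log hs2 hQ1
    have hlog2 : Real.log (1 - 2*r*Real.cos (2*t) + r^2) ≤ Real.log 4 :=
      Real.log_le_log (lt_of_lt_of_le hs2 hQ1) hQ2
    have hlogsin : Real.log (Real.sin t ^ 2) = 2 * Real.log |Real.sin t| := by
      rw [Real.log_pow, Real.log_abs]; push_cast; ring
    have hlog4 : Real.log 4 = 2 * Real.log 2 := by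
      rw [show (4:ℝ) = 2^2 by norm_num, Real.log_pow]; push_cast; ring
    have habs : |Real.log (1 - 2*r*Real.cos (2*t) + r^2)|
        ≤ 2*Real.log 2 - 2*Real.log |Real.sin t| := by
      rw [abs_le]
      refine ⟨?_, ?_⟩
      · rw [hlogsin] at hlog1
        have h2 : (0:ℝ) ≤ Real.log 2 := Real.log_nonneg one_le_two
        linarith
      · rw [hlog4] at hlog2
        have h3 : Real.log |Real.sin t| ≤ 0 :=
          Real.log_nonpos (abs_nonneg _) (abs_le.mpr ⟨Real.neg_one_le_sin t, Real.sin_le_one t⟩)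
        linarith
    calc ‖-(1/2) * Real.log (1 - 2*r*Real.cos (2*t) + r^2)‖
        = (1/2) * |Real.log (1 - 2*r*Real.cos (2*t) + r^2)| := by
          rw [Real.norm_eq_abs, abs_mul]; norm_num
      _ ≤ (1/2) * (2*Real.log 2 - 2*Real.log |Real.sin t|) :=
          mul_le_mul_of_nonneg_left habs (by norm_num)
      _ = Real.log 2 - Real.log |Real.sin t| := by ring
  · exact intervalIntegrable_const.sub (intInt_logabs_sin 0 x)
  · filter_upwards [ae_sin_ne] with t ht _
    have hs4 : (0:ℝ) < 4 * Real.sin t ^ 2 := by positivity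
    have harg : ContinuousAt (fun r : ℝ => 1 - 2*r*Real.cos (2*t) + r^2) 1 := by fun_prop
    have hval : (1:ℝ) - 2*1*Real.cos (2*t) + 1^2 = 4 * Real.sin t ^ 2 := by
      linear_combination (-2) * Real.cos_two_mul t - 4 * Real.sin_sq_add_cos_sq t
    have hca : ContinuousAt (fun r : ℝ => -(1/2) * Real.log (1 - 2*r*Real.cos (2*t) + r^2)) 1 := by
      refine ContinuousAt.mul continuousAt_const (harg.log ?_)
      show (1:ℝ) - 2*1*Real.cos (2*t) + 1^2 ≠ 0
      rw [hval]
      exact hs4.ne'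
    have hlim : -(1/2) * Real.log ((1:ℝ) - 2*1*Real.cos (2*t) + 1^2)
        = -Real.log 2 - Real.log |Real.sin t| := by
      rw [hval, show (4:ℝ) * Real.sin t^2 = (2*Real.sin t)^2 by ring, Real.log_pow,
        Real.log_mul two_ne_zero ht, Real.log_abs]
      push_cast; ring
    rw [← hlim]
    exact hca.tendsto.mono_left nhdsWithin_le_nhds

lemma claim3 (x : ℝ) :
    Tendsto (fun r : ℝ => ∑' k : ℕ, r^k * Real.sin (2*k*x)/(2*(k:ℝ)^2)) (𝓝[<] (1:ℝ))
      (𝓝 (∑' k : ℕ, Real.sin (2*k*x)/(2*(k:ℝ)^2))) := by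
  have hev : ∀ᶠ r in 𝓝[<] (1:ℝ), r ∈ Set.Ico (0:ℝ) 1 :=
    Ico_mem_nhdsLT_of_mem (by norm_num : (1:ℝ) ∈ Set.Ioc (0:ℝ) 1)
  have hsum : Summable (fun k : ℕ => 1/(k:ℝ)^2) := by
    have := summable_one_div_nat_pow (p := 2)
    exact this.mpr one_lt_two
  apply tendsto_tsum_of_dominated_convergence hsum
  · intro k
    have hca : ContinuousAt (fun r : ℝ => r^k * Real.sin (2*k*x)/(2*(k:ℝ)^2)) 1 := by fun_prop
    have htd := hca.tendsto
    simp only [one_pow, one_mul] at htd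
    exact htd.mono_left nhdsWithin_le_nhds
  · filter_upwards [hev] with r hr k
    rcases Nat.eq_zero_or_pos k with rfl | hk
    · simp
    · have hk1 : (1:ℝ) ≤ (k:ℝ) := Nat.one_le_cast.mpr hk
      have hr1 : |r| ≤ 1 := by rw [abs_of_nonneg hr.1]; exact hr.2.le
      have hrk : |r|^k ≤ 1 := pow_le_one₀ (abs_nonneg r) hr1
      have hsin1 : |Real.sin (2*k*x)| ≤ 1 :=
        abs_le.mpr ⟨Real.neg_one_le_sin _, Real.sin_le_one _⟩
      rw [Real.norm_eq_abs, abs_div, abs_mul, abs_pow,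
        abs_of_pos (show (0:ℝ) < 2*(k:ℝ)^2 by positivity)]
      have hnum : |r|^k * |Real.sin (2*k*x)| ≤ 1 := by
        calc |r|^k * |Real.sin (2*k*x)| ≤ 1 * 1 :=
              mul_le_mul hrk hsin1 (abs_nonneg _) zero_le_one
          _ = 1 := by ring
      exact div_le_div₀ zero_le_one hnum (by positivity) (by nlinarith)

lemma key (x : ℝ) : -(x * Real.log 2) - (∫ t in (0:ℝ)..x, Real.log |Real.sin t|)
    = ∑' k : ℕ, Real.sin (2*k*x)/(2*(k:ℝ)^2) := by
  have hev : (fun r : ℝ => ∫ t in (0:ℝ)..x, (-(1/2) * Real.log (1 - 2*r*Real.cos (2*t) + r^2)))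
      =ᶠ[𝓝[<] (1:ℝ)] (fun r : ℝ => ∑' k : ℕ, r^k * Real.sin (2*k*x)/(2*(k:ℝ)^2)) := by
    filter_upwards [Ico_mem_nhdsLT_of_mem (by norm_num : (1:ℝ) ∈ Set.Ioc (0:ℝ) 1)] with r hr
    exact claim1 hr.1 hr.2 x
  have h1 := (claim2 x).congr' hev
  have h2 := tendsto_nhds_unique h1 (claim3 x)
  rw [← h2]
  rw [intervalIntegral.integral_sub intervalIntegrable_const (intInt_logabs_sin 0 x),
    intervalIntegral.integral_const]
  simp only [sub_zero, smul_eq_mul]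
  ring

end UpsilonAux

theorem upsilon_two_eq (x : ℝ) :
    -∫ t in (0:ℝ)..x, Real.log |Real.sin t| =
      x * Real.log 2 + (1 / 2) * ∑' k : ℕ+, Real.sin (2 * k * x) / (k : ℝ) ^ 2 := by
  have hkey := UpsilonAux.key x
  have hswap : ∑' k : ℕ, Real.sin (2*k*x)/(2*(k:ℝ)^2)
      = (1/2) * ∑' k : ℕ+, Real.sin (2 * k * x) / (k : ℝ) ^ 2 := by
    rw [← tsum_mul_left]
    rw [← Function.Injective.tsum_eq (g := ((↑) : ℕ+ → ℕ))
      (f := fun k : ℕ => Real.sin (2*k*x)/(2*(k:ℝ)^2)) PNat.coe_injective ?hsupp]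
    case hsupp =>
      intro n hn
      rcases Nat.eq_zero_or_pos n with rfl | h
      · simp at hn
      · exact ⟨⟨n, h⟩, rfl⟩
    refine tsum_congr fun k => ?_
    have hk : ((k:ℕ):ℝ) ≠ 0 := Nat.cast_ne_zero.mpr k.pos.ne'
    field_simp
  rw [hswap] at hkey
  linarith
end

section
/- Newman's value for Υ⁴ at π/2: −(1/2) · ∫₀^{π/2} (π/2 − t)² · log(sin t) dt = (π³/48) · log 2 + (π/8) · ζ(3). -/
open Real MeasureTheory Filter

/-- The Riemann zeta value `ζ k = ∑_{m ≥ 1} 1 / m ^ k`. -/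
noncomputable def zetaVal (k : ℕ) : ℝ := ∑' m : ℕ+, 1 / (m : ℝ) ^ k


lemma cos_moment {n : ℕ} (hn : 1 ≤ n) :
    ∫ t in (0:ℝ)..(π/2), (π/2 - t)^2 * Real.cos (2*n*t) = π/(4*n^2) := by
  have hn0 : (n:ℝ) ≠ 0 := Nat.cast_ne_zero.mpr (by omega)
  set F : ℝ → ℝ := fun t => (π/2 - t)^2 * Real.sin (2*n*t)/(2*n)
      - (π/2 - t) * Real.cos (2*n*t)/(2*n^2) - Real.sin (2*n*t)/(4*n^3) with hF
  have key : ∀ t ∈ Set.uIcc (0:ℝ) (π/2),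
      HasDerivAt F ((π/2 - t)^2 * Real.cos (2*n*t)) t := by
    intro t _
    have hu : HasDerivAt (fun t : ℝ => 2*(n:ℝ)*t) (2*n) t := by
      simpa using (hasDerivAt_id t).const_mul (2*(n:ℝ))
    have hs : HasDerivAt (fun t : ℝ => Real.sin (2*n*t))
        (Real.cos (2*n*t) * (2*n)) t := (Real.hasDerivAt_sin _).comp t hu
    have hc : HasDerivAt (fun t : ℝ => Real.cos (2*n*t))
        (-Real.sin (2*n*t) * (2*n)) t := (Real.hasDerivAt_cos _).comp t hu
    have hp : HasDerivAt (fun t : ℝ => π/2 - t) (-1) t := by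
      simpa using (hasDerivAt_id t).const_sub (π/2)
    have hp2 : HasDerivAt (fun t : ℝ => (π/2 - t)^2) (2*(π/2 - t)*(-1)) t := by
      simpa using hp.fun_pow 2
    have h1 := ((hp2.fun_mul hs).div_const (2*(n:ℝ)))
    have h2 := ((hp.fun_mul hc).div_const (2*(n:ℝ)^2))
    have h3 := (hs.div_const (4*(n:ℝ)^3))
    have := (h1.fun_sub h2).fun_sub h3
    refine this.congr_deriv ?_
    field_simp
    ring
  have hcont : IntervalIntegrable (fun t => (π/2 - t)^2 * Real.cos (2*n*t))
      volume 0 (π/2) := by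
    apply Continuous.intervalIntegrable; continuity
  have := intervalIntegral.integral_eq_sub_of_hasDerivAt key hcont
  rw [this]
  have h1 : F (π/2) = 0 := by
    simp only [hF]
    rw [show 2*(n:ℝ)*(π/2) = n*π by ring, Real.sin_nat_mul_pi]
    ring
  have h2 : F 0 = -(π/(4*n^2)) := by
    simp only [hF, mul_zero, Real.sin_zero, Real.cos_zero]
    field_simp
    ring
  rw [h1, h2]; ring

lemma hasSum_L {r t : ℝ} (h0 : 0 ≤ r) (h1 : r < 1) :
    HasSum (fun n : ℕ => r^n * Real.cos (2*n*t) / n)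
      (-(1/2) * Real.log ((1-r)^2 + 4*r*Real.sin t^2)) := by
  set z : ℂ := (r:ℂ) * Complex.exp ((2*t:ℝ) * Complex.I) with hz
  have hznorm : ‖z‖ < 1 := by
    rw [hz]
    simp [Complex.norm_exp, abs_of_nonneg h0]
    · exact h1
  have h := (Complex.hasSum_taylorSeries_neg_log hznorm).mapL Complex.reCLM
  have hterm : ∀ n : ℕ, Complex.reCLM (z^n / n) = r^n * Real.cos (2*n*t) / n := by
    intro n
    have hzn : z^n = ((r^n : ℝ) : ℂ) * Complex.exp ((2*n*t:ℝ) * Complex.I) := by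
      rw [hz, mul_pow, ← Complex.exp_nat_mul]
      push_cast
      ring_nf
    have : z^n / (n:ℂ) = ((r^n / n : ℝ) : ℂ) * Complex.exp ((2*n*t:ℝ) * Complex.I) := by
      rw [hzn]; push_cast; ring
    rw [this]
    simp only [Complex.reCLM_apply, Complex.re_ofReal_mul, Complex.exp_ofReal_mul_I_re]
    ring
  have hsum : Complex.reCLM (-Complex.log (1 - z))
      = -(1/2) * Real.log ((1-r)^2 + 4*r*Real.sin t^2) := by
    have hz1 : (1:ℂ) - z ≠ 0 := by
      intro hc
      rw [sub_eq_zero] at hc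
      rw [← hc] at hznorm
      simp at hznorm
    have hzre : z.re = r * Real.cos (2*t) := by
      rw [hz, Complex.re_ofReal_mul, Complex.exp_ofReal_mul_I_re]
    have hzim : z.im = r * Real.sin (2*t) := by
      rw [hz, Complex.im_ofReal_mul, Complex.exp_ofReal_mul_I_im]
    have habs : ‖1 - z‖^2 = (1-r)^2 + 4*r*Real.sin t^2 := by
      rw [Complex.sq_norm, Complex.normSq_apply]
      simp only [Complex.sub_re, Complex.sub_im, Complex.one_re, Complex.one_im, hzre, hzim]
      have hc2 : Real.cos (2*t) = 1 - 2 * Real.sin t^2 := by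
        rw [Real.cos_two_mul']
        linear_combination Real.sin_sq_add_cos_sq t
      have hs2 : Real.sin (2*t) = 2 * Real.sin t * Real.cos t := Real.sin_two_mul t
      rw [hc2, hs2]
      linear_combination (4*r^2*Real.sin t^2) * Real.sin_sq_add_cos_sq t
    have habs_pos : 0 < ‖1 - z‖ := by
      simpa [norm_pos_iff] using hz1
    simp only [Complex.reCLM_apply, Complex.neg_re, Complex.log_re]
    rw [show Real.log ‖1-z‖ = (1/2) * Real.log (‖1-z‖^2) by
      rw [Real.log_pow]; push_cast; ring]
    rw [habs]
    ring
  rw [hsum] at h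
  simp only [hterm] at h
  exact h

lemma intervalIntegrable_log_zero : IntervalIntegrable Real.log volume 0 (π/2) := by
  have hg : IntervalIntegrable (fun x : ℝ => 2 * x ^ (-(1/2) : ℝ) + 1) volume 0 (π/2) :=
    (((intervalIntegral.intervalIntegrable_rpow' (by norm_num)).const_mul 2).add
      (intervalIntegrable_const))
  apply hg.mono_fun Real.measurable_log.aestronglyMeasurable
  rw [Filter.EventuallyLE, ae_restrict_iff' measurableSet_uIoc]
  refine Filter.Eventually.of_forall fun x hx => ?_
  rw [Set.uIoc_of_le (by positivity)] at hx
  obtain ⟨hx0, hx2⟩ := hx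
  have hrp : (0:ℝ) < x ^ (-(1/2) : ℝ) := Real.rpow_pos_of_pos hx0 _
  have key : |Real.log x| ≤ 2 * x ^ (-(1/2) : ℝ) + 1 := by
    rcases le_or_gt x 1 with hle | hgt
    · have hlog : Real.log x ≤ 0 := Real.log_nonpos (le_of_lt hx0) hle
      rw [abs_of_nonpos hlog]
      have : Real.log (x ^ (-(1/2) : ℝ)) = -(1/2) * Real.log x := Real.log_rpow hx0 _
      have hb : Real.log (x ^ (-(1/2) : ℝ)) ≤ x ^ (-(1/2) : ℝ) - 1 :=
        Real.log_le_sub_one_of_pos hrp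
      nlinarith
    · have hlog : 0 ≤ Real.log x := Real.log_nonneg (le_of_lt hgt)
      rw [abs_of_nonneg hlog]
      have h1 : Real.log x ≤ x - 1 := Real.log_le_sub_one_of_pos hx0
      have h2 : x ≤ 2 := le_trans hx2 (by nlinarith [Real.pi_le_four])
      nlinarith
  calc ‖Real.log x‖ = |Real.log x| := rfl
    _ ≤ 2 * x ^ (-(1/2) : ℝ) + 1 := key
    _ ≤ ‖2 * x ^ (-(1/2) : ℝ) + 1‖ := le_abs_self _

lemma intervalIntegrable_log_sin' :
    IntervalIntegrable (fun t => Real.log (Real.sin t)) volume 0 (π/2) := by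
  have hg : IntervalIntegrable (fun x : ℝ => |Real.log x| + Real.log (π/2)) volume 0 (π/2) :=
    (intervalIntegrable_log_zero.abs.add intervalIntegrable_const)
  apply hg.mono_fun (Real.measurable_log.comp Real.measurable_sin).aestronglyMeasurable
  rw [Filter.EventuallyLE, ae_restrict_iff' measurableSet_uIoc]
  refine Filter.Eventually.of_forall fun t ht => ?_
  rw [Set.uIoc_of_le (by positivity)] at ht
  obtain ⟨ht0, ht2⟩ := ht
  have hsin_pos : 0 < Real.sin t := Real.sin_pos_of_pos_of_lt_pi ht0
    (lt_of_le_of_lt ht2 (by linarith [Real.pi_pos]))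
  have hsin_le : Real.sin t ≤ 1 := Real.sin_le_one t
  have hlb : 2/π * t ≤ Real.sin t := Real.mul_le_sin (le_of_lt ht0) ht2
  have hlog_le : Real.log (Real.sin t) ≤ 0 := Real.log_nonpos (le_of_lt hsin_pos) hsin_le
  have hpi : (0:ℝ) < π := Real.pi_pos
  have hlog_ge : Real.log t - Real.log (π/2) ≤ Real.log (Real.sin t) := by
    have h1 : Real.log (2/π * t) ≤ Real.log (Real.sin t) :=
      Real.log_le_log (by positivity) hlb
    have h2 : Real.log (2/π * t) = Real.log t - Real.log (π/2) := by
      rw [Real.log_mul (by positivity) (ne_of_gt ht0)]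
      rw [show (2:ℝ)/π = (π/2)⁻¹ by field_simp, Real.log_inv]
      ring
    linarith
  have hpi2 : 0 ≤ Real.log (π/2) := Real.log_nonneg (by linarith [Real.pi_le_four, Real.pi_gt_three])
  calc ‖Real.log (Real.sin t)‖ = -Real.log (Real.sin t) := by
        rw [Real.norm_eq_abs, abs_of_nonpos hlog_le]
    _ ≤ -(Real.log t - Real.log (π/2)) := by linarith
    _ ≤ |Real.log t| + Real.log (π/2) := by
        have := neg_abs_le (Real.log t)
        linarith
    _ ≤ ‖|Real.log t| + Real.log (π/2)‖ := le_abs_self _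

lemma integral_L {r : ℝ} (h0 : 0 ≤ r) (h1 : r < 1) :
    ∫ t in (0:ℝ)..(π/2), (π/2 - t)^2 * (-(1/2) * Real.log ((1-r)^2 + 4*r*Real.sin t^2))
      = (π/4) * ∑' n : ℕ, r^n / (n:ℝ)^3 := by
  have hπ : (0:ℝ) < π := Real.pi_pos
  have hbound : ∀ (n : ℕ), ∀ t ∈ Set.Ioc (0:ℝ) (π/2),
      ‖(π/2 - t)^2 * (r^n * Real.cos (2*n*t) / n)‖ ≤ (π/2)^2 * r^n := by
    intro n t ht
    have h1t : |π/2 - t| ≤ π/2 := by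
      rw [abs_le]; constructor
      · linarith [ht.2]
      · linarith [ht.1]
    have hw : |(π/2 - t)^2| ≤ (π/2)^2 := by
      rw [abs_pow]
      exact pow_le_pow_left₀ (abs_nonneg _) h1t 2
    have h2t : |r^n * Real.cos (2*n*t) / n| ≤ r^n := by
      rcases Nat.eq_zero_or_pos n with rfl | hn
      · simp
      · have hn1 : (1:ℝ) ≤ (n:ℝ) := by exact_mod_cast hn
        rw [abs_div, abs_mul, abs_of_nonneg (pow_nonneg h0 n), Nat.abs_cast]
        have hc : |Real.cos (2*n*t)| ≤ 1 := Real.abs_cos_le_one _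
        have hb : r^n * |Real.cos (2*n*t)| ≤ r^n :=
          mul_le_of_le_one_right (pow_nonneg h0 n) hc
        have hdiv : r^n * |Real.cos (2*n*t)| / (n:ℝ) ≤ r^n * |Real.cos (2*n*t)| / 1 :=
          div_le_div_of_nonneg_left (by positivity) one_pos hn1
        simpa using le_trans hdiv (by simpa using hb)
    rw [Real.norm_eq_abs, abs_mul]
    exact mul_le_mul hw h2t (abs_nonneg _) (by positivity)
  have H := intervalIntegral.hasSum_integral_of_dominated_convergence
    (F := fun (n : ℕ) (t : ℝ) => (π/2 - t)^2 * (r^n * Real.cos (2*n*t) / n))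
    (bound := fun (n : ℕ) (_ : ℝ) => (π/2)^2 * r^n)
    (f := fun t => (π/2 - t)^2 * (-(1/2) * Real.log ((1-r)^2 + 4*r*Real.sin t^2)))
    (μ := volume) (a := 0) (b := π/2)
    (fun n => by apply Continuous.aestronglyMeasurable; fun_prop)
    (fun n => by
      refine Filter.Eventually.of_forall fun t ht => ?_
      rw [Set.uIoc_of_le (by positivity)] at ht
      exact hbound n t ht)
    (Filter.Eventually.of_forall fun t _ =>
      (summable_geometric_of_lt_one h0 h1).mul_left _)
    (by simpa using intervalIntegrable_const)
    (Filter.Eventually.of_forall fun t _ => (hasSum_L h0 h1).mul_left _)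
  have hval : ∀ n : ℕ, (∫ t in (0:ℝ)..(π/2), (π/2 - t)^2 * (r^n * Real.cos (2*n*t) / n))
      = (π/4) * (r^n / (n:ℝ)^3) := by
    intro n
    rcases Nat.eq_zero_or_pos n with rfl | hn
    · simp
    · have hn0 : ((n:ℝ))^3 ≠ 0 := by positivity
      have : (fun t => (π/2 - t)^2 * (r^n * Real.cos (2*n*t) / n))
          = fun t => (r^n / n) * ((π/2 - t)^2 * Real.cos (2*n*t)) := by
        funext t; ring
      rw [this, intervalIntegral.integral_const_mul, cos_moment hn]
      field_simp
  simp only [hval] at H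
  rw [H.tsum_eq.symm, tsum_mul_left]



lemma summable_cube : Summable (fun n : ℕ => 1 / (n:ℝ)^3) := by
  simpa using Real.summable_one_div_nat_pow.mpr (by norm_num : 2 ≤ 3)

lemma summable_sq : Summable (fun n : ℕ => 1 / (n:ℝ)^2) := by
  simpa using Real.summable_one_div_nat_pow.mpr (by norm_num : 2 ≤ 2)

lemma tendsto_abel :
    Tendsto (fun r : ℝ => ∑' n : ℕ, r^n / (n:ℝ)^3) (nhdsWithin 1 (Set.Iio 1))
      (nhds (∑' n : ℕ, 1 / (n:ℝ)^3)) := by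
  set S : ℝ := ∑' n : ℕ, 1 / (n:ℝ)^3 with hS
  set K : ℝ := ∑' n : ℕ, 1 / (n:ℝ)^2 with hK
  have key : ∀ r : ℝ, 0 ≤ r → r < 1 →
      ‖(∑' n : ℕ, r^n / (n:ℝ)^3) - S‖ ≤ (1 - r) * K := by
    intro r h0 h1
    have hle : ∀ n : ℕ, r^n / (n:ℝ)^3 ≤ 1 / (n:ℝ)^3 := by
      intro n
      have h1n : r^n ≤ 1 := pow_le_one₀ h0 h1.le
      have : (0:ℝ) ≤ (n:ℝ)^3 := by positivity
      exact div_le_div_of_nonneg_right h1n this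
    have hsum_r : Summable (fun n : ℕ => r^n / (n:ℝ)^3) :=
      Summable.of_nonneg_of_le (fun n => by positivity) hle summable_cube
    have hterm : ∀ n : ℕ, 1 / (n:ℝ)^3 - r^n / (n:ℝ)^3 ≤ (1 - r) * (1 / (n:ℝ)^2) := by
      intro n
      rcases Nat.eq_zero_or_pos n with rfl | hn
      · simp
      · have hnR : (0:ℝ) < (n:ℝ) := by exact_mod_cast hn
        have hbern : 1 - (n:ℝ) * (1 - r) ≤ r^n := by
          have := one_add_mul_le_pow (a := r - 1) (by linarith) n
          have h2 : 1 + (n:ℝ) * (r - 1) ≤ r^n := by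
            simpa using this
          linarith
        rw [div_sub_div_same, div_le_iff₀ (by positivity)]
        have : (1 - r) * (1 / (n:ℝ)^2) * (n:ℝ)^3 = (n:ℝ) * (1 - r) := by
          field_simp
        rw [this]
        linarith
    have hsub : (∑' n : ℕ, 1 / (n:ℝ)^3) - (∑' n : ℕ, r^n / (n:ℝ)^3)
        = ∑' n : ℕ, (1 / (n:ℝ)^3 - r^n / (n:ℝ)^3) := (Summable.tsum_sub summable_cube hsum_r).symm
    have hnn : 0 ≤ ∑' n : ℕ, (1 / (n:ℝ)^3 - r^n / (n:ℝ)^3) :=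
      tsum_nonneg (fun n => by linarith [hle n])
    have hbd : (∑' n : ℕ, (1 / (n:ℝ)^3 - r^n / (n:ℝ)^3)) ≤ (1 - r) * K := by
      rw [hK, ← tsum_mul_left]
      exact Summable.tsum_le_tsum hterm (summable_cube.sub hsum_r) (summable_sq.mul_left _)
    rw [norm_sub_rev, Real.norm_eq_abs, hsub, abs_of_nonneg hnn]
    exact hbd
  have hev : ∀ᶠ r : ℝ in nhdsWithin 1 (Set.Iio 1),
      ‖(∑' n : ℕ, r^n / (n:ℝ)^3) - S‖ ≤ (1 - r) * K := by
    have hmem : Set.Ioo (0:ℝ) 1 ∈ nhdsWithin 1 (Set.Iio 1) :=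
      Ioo_mem_nhdsLT_of_mem (by norm_num : (1:ℝ) ∈ Set.Ioc (0:ℝ) 1)
    filter_upwards [hmem] with r hr
    exact key r hr.1.le hr.2
  have hz : Tendsto (fun r : ℝ => (1 - r) * K) (nhdsWithin 1 (Set.Iio 1)) (nhds 0) := by
    have : Tendsto (fun r : ℝ => (1 - r) * K) (nhds 1) (nhds ((1 - 1) * K)) :=
      (Continuous.tendsto (by fun_prop) 1)
    simpa using this.mono_left nhdsWithin_le_nhds
  have := squeeze_zero_norm' hev hz
  have h2 := this.add_const S
  simpa using h2

lemma hzeta3 : (∑' n : ℕ, 1 / (n:ℝ)^3) = zetaVal 3 := by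
  have hsupp : (Function.support fun n : ℕ => 1/(n:ℝ)^3) ⊆
      Set.range (fun m : ℕ+ => (m:ℕ)) := by
    intro n hn
    rcases Nat.eq_zero_or_pos n with rfl | hpos
    · simp [Function.mem_support] at hn
    · exact ⟨⟨n, hpos⟩, rfl⟩
  have h := Function.Injective.tsum_eq (g := fun m : ℕ+ => (m:ℕ))
    (f := fun n : ℕ => 1/(n:ℝ)^3) PNat.coe_injective hsupp
  rw [zetaVal, ← h]

lemma integral_w : ∫ t in (0:ℝ)..(π/2), (π/2 - t)^2 = π^3/24 := by
  have key : ∀ t ∈ Set.uIcc (0:ℝ) (π/2),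
      HasDerivAt (fun t : ℝ => -((π/2 - t)^3/3)) ((π/2 - t)^2) t := by
    intro t _
    have hp : HasDerivAt (fun t : ℝ => π/2 - t) (-1) t := by
      simpa using (hasDerivAt_id t).const_sub (π/2)
    have := ((hp.fun_pow 3).div_const 3).fun_neg
    refine this.congr_deriv ?_
    ring
  rw [intervalIntegral.integral_eq_sub_of_hasDerivAt key
    (by apply Continuous.intervalIntegrable; fun_prop)]
  norm_num
  ring

lemma tendsto_int :
    Tendsto (fun r : ℝ => ∫ t in (0:ℝ)..(π/2),
        (π/2 - t)^2 * (-(1/2) * Real.log ((1-r)^2 + 4*r*Real.sin t^2)))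
      (nhdsWithin 1 (Set.Iio 1))
      (nhds (∫ t in (0:ℝ)..(π/2), (π/2 - t)^2 * (-(Real.log 2 + Real.log (Real.sin t))))) := by
  have hπ : (0:ℝ) < π := Real.pi_pos
  apply intervalIntegral.tendsto_integral_filter_of_dominated_convergence
    (bound := fun t => (π/2)^2 * ((1/2) * Real.log 5 - Real.log (Real.sin t)))
  · refine Filter.Eventually.of_forall fun r => ?_
    apply Measurable.aestronglyMeasurable
    apply Measurable.mul (by fun_prop)
    exact (Real.measurable_log.comp (by fun_prop)).const_mul _
  · have hmem : Set.Ico (1/2 : ℝ) 1 ∈ nhdsWithin 1 (Set.Iio 1) :=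
      Ico_mem_nhdsLT_of_mem (by norm_num : (1:ℝ) ∈ Set.Ioc (1/2 : ℝ) 1)
    filter_upwards [hmem] with r hr
    refine Filter.Eventually.of_forall fun t ht => ?_
    rw [Set.uIoc_of_le (by positivity)] at ht
    obtain ⟨ht0, ht2⟩ := ht
    obtain ⟨hr0, hr1⟩ := hr
    have hsin_pos : 0 < Real.sin t := Real.sin_pos_of_pos_of_lt_pi ht0 (by linarith)
    have hsin_le : Real.sin t ≤ 1 := Real.sin_le_one t
    set A := (1-r)^2 + 4*r*Real.sin t^2 with hA
    have hA5 : A ≤ 5 := by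
      have h1 : (1-r)^2 ≤ 1 := by nlinarith
      have h2 : 4*r*Real.sin t^2 ≤ 4 := by nlinarith
      linarith
    have hA2 : 2 * Real.sin t^2 ≤ A := by nlinarith
    have hApos : 0 < A := by nlinarith
    have hlogsin : Real.log (Real.sin t) ≤ 0 := Real.log_nonpos hsin_pos.le hsin_le
    have hup : Real.log A ≤ Real.log 5 := Real.log_le_log hApos hA5
    have hlo : Real.log 2 + 2 * Real.log (Real.sin t) ≤ Real.log A := by
      have := Real.log_le_log (by positivity : (0:ℝ) < 2 * Real.sin t^2) hA2
      rw [Real.log_mul (by norm_num) (by positivity), Real.log_pow] at this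
      push_cast at this
      linarith
    have hlog2 : (0:ℝ) ≤ Real.log 2 := Real.log_nonneg (by norm_num)
    have hlog5 : (0:ℝ) ≤ Real.log 5 := Real.log_nonneg (by norm_num)
    have habs : |Real.log A| ≤ Real.log 5 - 2 * Real.log (Real.sin t) := by
      rw [abs_le]; constructor <;> linarith
    have h1t : |π/2 - t| ≤ π/2 := by rw [abs_le]; constructor <;> linarith
    have hw : |(π/2 - t)^2| ≤ (π/2)^2 := by
      rw [abs_pow]; exact pow_le_pow_left₀ (abs_nonneg _) h1t 2
    rw [Real.norm_eq_abs, abs_mul]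
    have h2 : |(-(1/2) * Real.log A)| ≤ (1/2) * Real.log 5 - Real.log (Real.sin t) := by
      rw [abs_mul]
      have : |(-(1/2) : ℝ)| = 1/2 := by norm_num
      rw [this]
      linarith
    exact mul_le_mul hw h2 (abs_nonneg _) (by positivity)
  · exact (intervalIntegrable_const.sub intervalIntegrable_log_sin').const_mul _
  · refine Filter.Eventually.of_forall fun t ht => ?_
    rw [Set.uIoc_of_le (by positivity)] at ht
    obtain ⟨ht0, ht2⟩ := ht
    have hsin_pos : 0 < Real.sin t := Real.sin_pos_of_pos_of_lt_pi ht0 (by linarith)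
    have hA : Tendsto (fun r : ℝ => (1-r)^2 + 4*r*Real.sin t^2) (nhds 1)
        (nhds (4 * Real.sin t^2)) := by
      have := Continuous.tendsto (f := fun r : ℝ => (1-r)^2 + 4*r*Real.sin t^2)
        (by fun_prop) 1
      simpa using this
    have hlog : Tendsto (fun r : ℝ => Real.log ((1-r)^2 + 4*r*Real.sin t^2)) (nhds 1)
        (nhds (Real.log (4 * Real.sin t^2))) :=
      (Real.continuousAt_log (by positivity)).tendsto.comp hA
    have heq : -(1/2) * Real.log (4 * Real.sin t^2) = -(Real.log 2 + Real.log (Real.sin t)) := by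
      rw [show (4:ℝ) * Real.sin t^2 = (2 * Real.sin t)^2 by ring, Real.log_pow,
        Real.log_mul (by norm_num) (ne_of_gt hsin_pos)]
      push_cast
      ring
    have := (hlog.const_mul (-(1/2) : ℝ)).const_mul ((π/2 - t)^2)
    rw [show ((π/2 - t)^2) * (-(1/2) * Real.log (4 * Real.sin t^2))
        = (π/2 - t)^2 * (-(Real.log 2 + Real.log (Real.sin t))) by rw [heq]] at this
    exact this.mono_left nhdsWithin_le_nhds



theorem upsilon_four_at_pi_div_two :
    -(1 / 2) * ∫ t in (0:ℝ)..(π / 2), (π / 2 - t) ^ 2 * Real.log (Real.sin t) =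
      π ^ 3 / 48 * Real.log 2 + π / 8 * zetaVal 3 := by
  have hπ : (0:ℝ) < π := Real.pi_pos
  have h1 : Tendsto (fun r : ℝ => ∫ t in (0:ℝ)..(π/2),
      (π/2 - t)^2 * (-(1/2) * Real.log ((1-r)^2 + 4*r*Real.sin t^2)))
      (nhdsWithin 1 (Set.Iio 1)) (nhds ((π/4) * zetaVal 3)) := by
    rw [← hzeta3]
    apply Tendsto.congr' _ (tendsto_abel.const_mul (π/4))
    have hmem : Set.Ico (0:ℝ) 1 ∈ nhdsWithin 1 (Set.Iio 1) :=
      Ico_mem_nhdsLT_of_mem (by norm_num : (1:ℝ) ∈ Set.Ioc (0:ℝ) 1)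
    filter_upwards [hmem] with r hr
    exact (integral_L hr.1 hr.2).symm
  have hInt : (∫ t in (0:ℝ)..(π/2), (π/2 - t)^2 * (-(Real.log 2 + Real.log (Real.sin t))))
      = (π/4) * zetaVal 3 := tendsto_nhds_unique tendsto_int h1
  have hiw : IntervalIntegrable (fun t : ℝ => (-Real.log 2) * (π/2 - t)^2) volume 0 (π/2) := by
    apply Continuous.intervalIntegrable; fun_prop
  have hiws : IntervalIntegrable (fun t : ℝ => (π/2 - t)^2 * Real.log (Real.sin t))
      volume 0 (π/2) :=
    intervalIntegrable_log_sin'.continuousOn_mul (by fun_prop : Continuous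
      fun t : ℝ => (π/2 - t)^2).continuousOn
  have hsplit : (∫ t in (0:ℝ)..(π/2), (π/2 - t)^2 * (-(Real.log 2 + Real.log (Real.sin t))))
      = (-Real.log 2) * (π^3/24) - ∫ t in (0:ℝ)..(π/2), (π/2 - t)^2 * Real.log (Real.sin t) := by
    have heq : (fun t : ℝ => (π/2 - t)^2 * (-(Real.log 2 + Real.log (Real.sin t))))
        = fun t : ℝ => (-Real.log 2) * (π/2 - t)^2
            - (π/2 - t)^2 * Real.log (Real.sin t) := by
      funext t; ring
    rw [heq, intervalIntegral.integral_sub hiw hiws,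
      intervalIntegral.integral_const_mul, integral_w]
  rw [hsplit] at hInt
  linarith [hInt]
end

section
/- The first odd moment of log sine on [0, π/2]: ∫₀^{π/2} t · log(sin t) dt = (7/16) · ζ(3) − (π²/8) · log 2. -/
open Real MeasureTheory Filter Topology

lemma integral_t_cos (n : ℕ) (hn : n ≠ 0) :
    ∫ t in (0:ℝ)..(π/2), t * Real.cos (2*n*t) = ((-1)^n - 1)/(4*n^2) := by
  have hn' : (n:ℝ) ≠ 0 := Nat.cast_ne_zero.mpr hn
  have hF : ∀ t ∈ Set.uIcc (0:ℝ) (π/2), HasDerivAt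
      (fun t : ℝ => t * Real.sin (2*n*t)/(2*n) + Real.cos (2*n*t)/(4*n^2))
      (t * Real.cos (2*n*t)) t := by
    intro t _
    have h1 : HasDerivAt (fun t : ℝ => 2*(n:ℝ)*t) (2*n) t := by
      simpa using (hasDerivAt_id t).const_mul (2*(n:ℝ))
    have hsin : HasDerivAt (fun t : ℝ => Real.sin (2*n*t))
        (Real.cos (2*n*t) * (2*n)) t := (Real.hasDerivAt_sin _).comp t h1
    have hcos : HasDerivAt (fun t : ℝ => Real.cos (2*n*t))
        (-Real.sin (2*n*t) * (2*n)) t := (Real.hasDerivAt_cos _).comp t h1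
    have := (((hasDerivAt_id t).mul hsin).div_const (2*(n:ℝ))).add
      (hcos.div_const (4*(n:ℝ)^2))
    refine this.congr_deriv ?_
    simp only [id]
    field_simp
    ring
  rw [intervalIntegral.integral_eq_sub_of_hasDerivAt hF ((continuous_id.mul (by fun_prop)).intervalIntegrable _ _)]
  have h2 : 2*(n:ℝ)*(π/2) = n*π := by ring
  have hs : Real.sin (2*n*(π/2)) = 0 := by rw [h2]; exact Real.sin_nat_mul_pi n
  have hc : Real.cos (2*n*(π/2)) = (-1)^n := by
    rw [h2]
    simpa using Real.cos_nat_mul_pi_sub 0 n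
  rw [hs, hc]
  norm_num
  ring


noncomputable def zz (r t : ℝ) : ℂ := 1 - (r:ℂ) * Complex.exp ((2*t:ℝ) * Complex.I)

lemma normSq_zz (r t : ℝ) : Complex.normSq (zz r t) = 1 - 2*r*Real.cos (2*t) + r^2 := by
  have hre : (Complex.exp (((2*t:ℝ)) * Complex.I)).re = Real.cos (2*t) :=
    Complex.exp_ofReal_mul_I_re _
  have him : (Complex.exp (((2*t:ℝ)) * Complex.I)).im = Real.sin (2*t) :=
    Complex.exp_ofReal_mul_I_im _
  simp only [zz, Complex.normSq_apply, Complex.sub_re, Complex.sub_im, Complex.one_re,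
    Complex.one_im, Complex.mul_re, Complex.mul_im, Complex.ofReal_re, Complex.ofReal_im,
    hre, him]
  nlinarith [Real.sin_sq_add_cos_sq (2*t)]

lemma sin_le_abs_zz {r : ℝ} (h1 : 1/2 ≤ r) (h2 : r ≤ 1) (t : ℝ) :
    Real.sin t ≤ ‖zz r t‖ := by
  have key : (Real.sin t)^2 ≤ Complex.normSq (zz r t) := by
    rw [normSq_zz]
    have hc : Real.cos (2*t) = 1 - 2 * Real.sin t ^ 2 := by
      rw [Real.cos_two_mul]
      nlinarith [Real.sin_sq_add_cos_sq t]
    nlinarith [Real.sin_sq_add_cos_sq t]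
  calc Real.sin t ≤ |Real.sin t| := le_abs_self _
    _ = Real.sqrt ((Real.sin t)^2) := (Real.sqrt_sq_eq_abs _).symm
    _ ≤ Real.sqrt (Complex.normSq (zz r t)) := Real.sqrt_le_sqrt key
    _ = ‖zz r t‖ := (Complex.norm_def _).symm

lemma abs_zz_le {r : ℝ} (h0 : 0 ≤ r) (h2 : r ≤ 1) (t : ℝ) : ‖zz r t‖ ≤ 2 := by
  have hh : ‖(r:ℂ) * Complex.exp ((2*t:ℝ) * Complex.I)‖ = r := by
    rw [norm_mul, Complex.norm_real, Complex.norm_exp_ofReal_mul_I, Real.norm_eq_abs, abs_of_nonneg h0, mul_one]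
  calc ‖zz r t‖
      ≤ ‖(1:ℂ)‖ + ‖(r:ℂ) * Complex.exp ((2*t:ℝ) * Complex.I)‖ :=
        norm_sub_le _ _
    _ ≤ 2 := by rw [hh, norm_one]; linarith

lemma abs_zz_one {t : ℝ} (h0 : 0 ≤ t) (h1 : t ≤ π/2) : ‖zz 1 t‖ = 2 * Real.sin t := by
  have hs : 0 ≤ Real.sin t := Real.sin_nonneg_of_nonneg_of_le_pi h0 (by linarith [Real.pi_pos])
  rw [Complex.norm_def, normSq_zz]
  have hc : Real.cos (2*t) = 1 - 2 * Real.sin t ^ 2 := by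
    rw [Real.cos_two_mul]; nlinarith [Real.sin_sq_add_cos_sq t]
  rw [hc, show (1:ℝ) - 2*1*(1 - 2 * Real.sin t ^ 2) + 1^2 = (2*Real.sin t)^2 by ring]
  exact Real.sqrt_sq (by linarith)


noncomputable def GG (t : ℝ) : ℝ := Real.log 2 + Real.log (π/2) + 2 * t ^ (-(1/2) : ℝ)

lemma log_bound {t v : ℝ} (ht0 : 0 < t) (ht1 : t ≤ π/2) (h1 : Real.sin t ≤ v) (h2 : v ≤ 2) :
    |Real.log v| ≤ GG t := by
  have hpi := Real.pi_pos
  have hsin : 0 < Real.sin t := Real.sin_pos_of_pos_of_lt_pi ht0 (by linarith)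
  have hv : 0 < v := lt_of_lt_of_le hsin h1
  have hl2 : 0 ≤ Real.log 2 := Real.log_nonneg (by norm_num)
  have hlp : 0 ≤ Real.log (π/2) := Real.log_nonneg (by linarith [Real.pi_gt_three])
  have hrp : 0 < t ^ (-(1/2) : ℝ) := Real.rpow_pos_of_pos ht0 _
  -- -log t ≤ 2 * t^(-1/2)
  have hkey : -Real.log t ≤ 2 * t ^ (-(1/2) : ℝ) := by
    have h := Real.log_le_sub_one_of_pos (Real.rpow_pos_of_pos ht0 (-(1/2) : ℝ))
    rw [Real.log_rpow ht0] at h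
    nlinarith
  rw [abs_le]
  constructor
  · -- lower bound : -(GG t) ≤ log v
    have h3 : Real.log (2/π * t) ≤ Real.log v := by
      apply Real.log_le_log (by positivity)
      exact le_trans (Real.mul_le_sin ht0.le ht1) h1
    have h4 : Real.log (2/π * t) = -Real.log (π/2) + Real.log t := by
      rw [Real.log_mul (by positivity) ht0.ne', show (2:ℝ)/π = (π/2)⁻¹ by field_simp,
        Real.log_inv]
    simp only [GG]
    nlinarith
  · -- upper bound
    have : Real.log v ≤ Real.log 2 := Real.log_le_log hv h2
    simp only [GG]; nlinarith

lemma integrable_GG : IntegrableOn (fun t => (π/2) * GG t) (Set.Ioc 0 (π/2)) volume := by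
  have hpi := Real.pi_pos
  have h1 : IntegrableOn (fun _ : ℝ => Real.log 2 + Real.log (π/2)) (Set.Ioc 0 (π/2)) volume := by
    exact integrableOn_const (by rw [Real.volume_Ioc]; exact ENNReal.ofReal_ne_top)
  have h2 : IntegrableOn (fun t : ℝ => 2 * t ^ (-(1/2) : ℝ)) (Set.Ioc 0 (π/2)) volume := by
    apply Integrable.const_mul
    exact (intervalIntegrable_iff_integrableOn_Ioc_of_le (by positivity)).mp
      (intervalIntegral.intervalIntegrable_rpow' (by norm_num))
  have h3 := (h1.add h2).const_mul (π/2)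
  exact h3.congr (Filter.Eventually.of_forall fun t => by simp [GG, mul_add])



lemma hasSum_log_zz {r : ℝ} (hr0 : 0 ≤ r) (hr1 : r < 1) (t : ℝ) :
    HasSum (fun n : ℕ => -(t * (r^n * Real.cos (2*n*t) / n)))
      (t * Real.log (‖zz r t‖)) := by
  set w : ℂ := (r:ℂ) * Complex.exp ((2*t:ℝ) * Complex.I) with hw
  have hz : ‖w‖ < 1 := by
    rw [hw, norm_mul, Complex.norm_real,
      Complex.norm_exp_ofReal_mul_I, Real.norm_eq_abs, abs_of_nonneg hr0, mul_one]
    exact hr1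
  have h1 := Complex.hasSum_re (Complex.hasSum_taylorSeries_neg_log hz)
  have hterm : ∀ n : ℕ, ((w^n)/(n:ℂ)).re = r^n * Real.cos (2*n*t) / n := by
    intro n
    have harg : (n:ℂ) * ((2*t:ℝ) * Complex.I) = ((2*n*t:ℝ):ℂ) * Complex.I := by
      push_cast; ring
    have hwn : (w^n)/(n:ℂ) = ((r^n/n : ℝ):ℂ) * Complex.exp ((2*n*t:ℝ) * Complex.I) := by
      rw [hw, mul_pow, ← Complex.exp_nat_mul, harg]
      push_cast
      ring
    rw [hwn, Complex.re_ofReal_mul, Complex.exp_ofReal_mul_I_re]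
    ring
  have h2 : HasSum (fun n : ℕ => r^n * Real.cos (2*n*t) / n)
      (-Real.log (‖zz r t‖)) := by
    have hre : (-Complex.log (1 - w)).re = -Real.log (‖zz r t‖) := by
      rw [Complex.neg_re, Complex.log_re]; rfl
    rw [← hre]
    exact h1.congr_fun fun n => (hterm n).symm
  have h3 := h2.mul_left (-t)
  have : t * Real.log (‖zz r t‖) = -t * -Real.log (‖zz r t‖) := by ring
  rw [this]
  exact h3.congr_fun fun n => by ring

noncomputable def aa (n : ℕ) : ℝ := (1 - (-1)^n)/(4*(n:ℝ)^3)

lemma integral_eq_sum {r : ℝ} (hr0 : 0 < r) (hr1 : r < 1) :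
    ∫ t in Set.Ioc (0:ℝ) (π/2), t * Real.log (‖zz r t‖)
      = ∑' n : ℕ, r^n * aa n := by
  have hpi := Real.pi_pos
  set F : ℕ → ℝ → ℝ := fun n t => -(t * (r^n * Real.cos (2*n*t) / n)) with hF
  have hcont : ∀ n : ℕ, Continuous (F n) := by
    intro n
    apply Continuous.neg
    exact continuous_id.mul ((by fun_prop : Continuous fun t : ℝ => r^n * Real.cos (2*n*t)).div_const _)
  have hInt : ∀ n : ℕ, IntegrableOn (F n) (Set.Ioc 0 (π/2)) volume := fun n =>
    (hcont n).integrableOn_Ioc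
  have hBound : ∀ n : ℕ, ∀ t ∈ Set.Ioc (0:ℝ) (π/2), ‖F n t‖ ≤ (π/2) * r^n := by
    intro n t ht
    have hrn : (0:ℝ) ≤ r^n := by positivity
    rcases Nat.eq_zero_or_pos n with rfl | hn
    · simp [hF, ht.1.le, ht.2, abs_of_pos ht.1]
      positivity
    · have h1 : |r^n * Real.cos (2*n*t) / n| ≤ r^n := by
        rw [abs_div, abs_mul, abs_of_nonneg hrn, Nat.abs_cast]
        rw [div_le_iff₀ (by exact_mod_cast hn)]
        calc r^n * |Real.cos (2*n*t)| ≤ r^n * 1 :=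
              mul_le_mul_of_nonneg_left (Real.abs_cos_le_one _) hrn
          _ ≤ r^n * n := by
              apply mul_le_mul_of_nonneg_left _ hrn
              exact_mod_cast hn
      calc ‖F n t‖ = |t| * |r^n * Real.cos (2*n*t) / n| := by
            rw [hF]; rw [norm_neg, Real.norm_eq_abs, abs_mul]
        _ ≤ (π/2) * r^n := by
            apply mul_le_mul (by rw [abs_of_pos ht.1]; exact ht.2) h1 (abs_nonneg _)
            linarith
  have hSum : Summable fun n : ℕ => ∫ t in Set.Ioc (0:ℝ) (π/2), ‖F n t‖ := by
    apply Summable.of_nonneg_of_le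
      (fun n => integral_nonneg fun t => norm_nonneg _)
      (fun n => ?_)
      (((summable_geometric_of_lt_one hr0.le hr1).mul_left (π/2)).mul_left (π/2))
    calc (∫ t in Set.Ioc (0:ℝ) (π/2), ‖F n t‖)
        ≤ ∫ _ in Set.Ioc (0:ℝ) (π/2), (π/2) * r^n := by
          apply setIntegral_mono_on (hInt n).norm _ measurableSet_Ioc (hBound n)
          exact integrableOn_const (by rw [Real.volume_Ioc]; exact ENNReal.ofReal_ne_top)
      _ = (π/2) * ((π/2) * r^n) := by
          rw [setIntegral_const, Real.volume_real_Ioc_of_le (by linarith), smul_eq_mul]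
          ring_nf
  have key := integral_tsum_of_summable_integral_norm
    (μ := volume.restrict (Set.Ioc (0:ℝ) (π/2))) (F := F) hInt hSum
  have hRHS : (∫ t in Set.Ioc (0:ℝ) (π/2), ∑' n : ℕ, F n t)
      = ∫ t in Set.Ioc (0:ℝ) (π/2), t * Real.log (‖zz r t‖) := by
    apply setIntegral_congr_fun measurableSet_Ioc
    intro t _
    exact (hasSum_log_zz hr0.le hr1 t).tsum_eq
  have hTerm : ∀ n : ℕ, (∫ t in Set.Ioc (0:ℝ) (π/2), F n t) = r^n * aa n := by
    intro n
    rcases Nat.eq_zero_or_pos n with rfl | hn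
    · simp [hF, aa]
    · have hn' : (n:ℝ) ≠ 0 := Nat.cast_ne_zero.mpr hn.ne'
      have h1 : ∀ t : ℝ, F n t = (-(r^n/n)) * (t * Real.cos (2*n*t)) := by
        intro t; rw [hF]; ring
      rw [show (∫ t in Set.Ioc (0:ℝ) (π/2), F n t)
          = ∫ t in Set.Ioc (0:ℝ) (π/2), (-(r^n/n)) * (t * Real.cos (2*n*t)) from by
            simp_rw [h1]]
      rw [← intervalIntegral.integral_of_le (by linarith : (0:ℝ) ≤ π/2),
        intervalIntegral.integral_const_mul, integral_t_cos n hn.ne']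
      rw [aa]
      field_simp
      ring
  calc (∫ t in Set.Ioc (0:ℝ) (π/2), t * Real.log (‖zz r t‖))
      = ∫ t in Set.Ioc (0:ℝ) (π/2), ∑' n : ℕ, F n t := hRHS.symm
    _ = ∑' n : ℕ, ∫ t in Set.Ioc (0:ℝ) (π/2), F n t := key.symm
    _ = ∑' n : ℕ, r^n * aa n := tsum_congr hTerm

set_option maxHeartbeats 1000000 in
lemma sum_aa : HasSum aa (7/16 * zetaVal 3) := by
  have hsum : Summable (fun n : ℕ => 1/(n:ℝ)^3) := Real.summable_one_div_nat_pow.mpr (by norm_num)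
  set Z := ∑' n : ℕ, 1/(n:ℝ)^3 with hZdef
  have hZsum : HasSum (fun n : ℕ => 1/(n:ℝ)^3) Z := hsum.hasSum
  have hzeta : zetaVal 3 = Z := by
    rw [zetaVal, hZdef]
    have hinj : Function.Injective (fun m : ℕ+ => (m : ℕ)) := fun a b h => PNat.coe_injective h
    have hsupp : Function.support (fun n : ℕ => 1/(n:ℝ)^3) ⊆ Set.range (fun m : ℕ+ => (m : ℕ)) := by
      intro n hn
      rcases Nat.eq_zero_or_pos n with rfl | hp
      · simp [Function.mem_support] at hn
      · exact ⟨⟨n, hp⟩, rfl⟩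
    rw [← hinj.tsum_eq hsupp]
  have he : HasSum (fun k : ℕ => 1/(((2*k : ℕ)):ℝ)^3) (Z/8) :=
    (hZsum.div_const 8).congr_fun fun k => by push_cast; ring
  have hosum : Summable (fun k : ℕ => 1/(((2*k+1 : ℕ)):ℝ)^3) :=
    hsum.comp_injective fun a b h => by omega
  set C := ∑' k : ℕ, 1/(((2*k+1 : ℕ)):ℝ)^3 with hCdef
  have ho : HasSum (fun k : ℕ => 1/(((2*k+1 : ℕ)):ℝ)^3) C := hosum.hasSum
  have htot : HasSum (fun n : ℕ => 1/(n:ℝ)^3) (Z/8 + C) := he.even_add_odd ho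
  have hC : C = 7/8 * Z := by
    have := htot.unique hZsum
    linarith
  have haE : HasSum (fun k : ℕ => aa (2*k)) 0 := by
    have : (fun k : ℕ => aa (2*k)) = fun _ => (0:ℝ) := by
      funext k
      simp [aa, pow_mul]
    rw [this]
    exact hasSum_zero
  have haO : HasSum (fun k : ℕ => aa (2*k+1)) (C/2) := by
    refine (ho.div_const 2).congr_fun fun k => ?_
    have h1 : ((-1:ℝ))^(2*k+1) = -1 := by
      rw [pow_succ, pow_mul]
      norm_num
    have hk : ((2*(k:ℝ)+1)) ≠ 0 := by positivity
    rw [aa, h1]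
    push_cast
    field_simp
    ring
  have := haE.even_add_odd haO
  rw [hzeta]
  have hval : 7/16 * Z = 0 + C/2 := by rw [hC]; ring
  rw [hval]
  exact this

lemma cont_zz_left (t : ℝ) : Continuous fun r : ℝ => zz r t := by
  unfold zz
  fun_prop

lemma cont_abs_zz_right (r : ℝ) : Continuous fun t : ℝ => ‖zz r t‖ := by
  apply continuous_norm.comp
  unfold zz
  apply Continuous.sub continuous_const
  apply Continuous.mul continuous_const
  apply Complex.continuous_exp.comp
  fun_prop

lemma abs_zz_pos {r : ℝ} (h0 : 0 ≤ r) (h1 : r < 1) (t : ℝ) : 0 < ‖zz r t‖ := by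
  have hw : ‖(r:ℂ) * Complex.exp ((2*t:ℝ) * Complex.I)‖ = r := by
    rw [norm_mul, Complex.norm_real, Complex.norm_exp_ofReal_mul_I, Real.norm_eq_abs, abs_of_nonneg h0, mul_one]
  have := norm_sub_norm_le (1:ℂ) ((r:ℂ) * Complex.exp ((2*t:ℝ) * Complex.I))
  rw [norm_one, hw] at this
  calc (0:ℝ) < 1 - r := by linarith
    _ ≤ ‖zz r t‖ := this

lemma key_limit :
    ∫ t in Set.Ioc (0:ℝ) (π/2), t * Real.log (2 * Real.sin t) = ∑' n : ℕ, aa n := by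
  have hpi := Real.pi_pos
  have hne : (𝓝[Set.Ioo ((1:ℝ)/2) 1] 1).NeBot := by
    apply mem_closure_iff_nhdsWithin_neBot.mp
    rw [closure_Ioo (by norm_num : (1:ℝ)/2 ≠ 1)]
    constructor <;> norm_num
  have hA : Tendsto (fun r => ∫ t in Set.Ioc (0:ℝ) (π/2), t * Real.log (‖zz r t‖))
      (𝓝[Set.Ioo ((1:ℝ)/2) 1] 1)
      (𝓝 (∫ t in Set.Ioc (0:ℝ) (π/2), t * Real.log (2 * Real.sin t))) := by
    apply tendsto_integral_filter_of_dominated_convergence (fun t => (π/2) * GG t)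
    · filter_upwards [self_mem_nhdsWithin] with r hr
      have h1 : Continuous fun t => t * Real.log (‖zz r t‖) := by
        apply continuous_id.mul
        refine continuous_iff_continuousAt.mpr fun t => ?_
        exact ContinuousAt.comp (x := t) (f := fun t => ‖zz r t‖)
          (Real.continuousAt_log (abs_zz_pos (by linarith [hr.1]) hr.2 t).ne')
          ((cont_abs_zz_right r).continuousAt)
      exact h1.aestronglyMeasurable
    · filter_upwards [self_mem_nhdsWithin] with r hr
      rw [ae_restrict_iff' measurableSet_Ioc]
      refine Eventually.of_forall fun t ht => ?_
      have hb := log_bound ht.1 ht.2 (sin_le_abs_zz hr.1.le hr.2.le t)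
        (abs_zz_le (by linarith [hr.1]) hr.2.le t)
      calc ‖t * Real.log (‖zz r t‖)‖
          = |t| * |Real.log (‖zz r t‖)| := by rw [Real.norm_eq_abs, abs_mul]
        _ ≤ (π/2) * GG t := by
            apply mul_le_mul _ hb (abs_nonneg _) (by linarith)
            rw [abs_of_pos ht.1]; exact ht.2
    · exact integrable_GG
    · rw [ae_restrict_iff' measurableSet_Ioc]
      refine Eventually.of_forall fun t ht => ?_
      have hc : ContinuousAt (fun r : ℝ => t * Real.log (‖zz r t‖)) 1 := by
        apply ContinuousAt.mul continuousAt_const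
        apply (Real.continuousAt_log _).comp
        · exact (continuous_norm.comp (cont_zz_left t)).continuousAt
        · rw [abs_zz_one ht.1.le ht.2]
          have := Real.sin_pos_of_pos_of_lt_pi ht.1 (by linarith [ht.2])
          positivity
      have h5 := hc.tendsto.mono_left (nhdsWithin_le_nhds (s := Set.Ioo ((1:ℝ)/2) 1))
      rwa [abs_zz_one ht.1.le ht.2] at h5
  have hB : Tendsto (fun r : ℝ => ∑' n : ℕ, r^n * aa n) (𝓝[Set.Ioo ((1:ℝ)/2) 1] 1)
      (𝓝 (∑' n : ℕ, aa n)) := by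
    have hsum : Summable (fun n : ℕ => 1/(n:ℝ)^3) :=
      Real.summable_one_div_nat_pow.mpr (by norm_num)
    apply tendsto_tsum_of_dominated_convergence (bound := fun n => |aa n|)
    · apply Summable.of_nonneg_of_le (fun n => abs_nonneg _) (fun n => ?_)
        (hsum.mul_left (1/2))
      rcases Nat.eq_zero_or_pos n with rfl | hn
      · simp [aa]
      · have h2 : |1 - (-1:ℝ)^n| ≤ 2 := by
          rcases Nat.even_or_odd n with he | ho
          · rw [he.neg_one_pow]; norm_num
          · rw [ho.neg_one_pow]; norm_num
        have hn3 : (0:ℝ) < (n:ℝ)^3 := by positivity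
        rw [aa, abs_div, abs_of_pos (by positivity : (0:ℝ) < 4*(n:ℝ)^3)]
        rw [div_le_iff₀ (by positivity)]
        calc |1 - (-1:ℝ)^n| ≤ 2 := h2
          _ ≤ 1/2 * (1/(n:ℝ)^3) * (4*(n:ℝ)^3) := by
              rw [show (1:ℝ)/2 * (1/(n:ℝ)^3) * (4*(n:ℝ)^3) = 2 * ((n:ℝ)^3 / (n:ℝ)^3) by ring,
                div_self hn3.ne']
              norm_num
    · intro n
      have : Tendsto (fun r : ℝ => r^n * aa n) (𝓝 (1:ℝ)) (𝓝 (1^n * aa n)) :=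
        ((continuous_pow n).tendsto 1).mul_const _
      rw [one_pow, one_mul] at this
      exact this.mono_left nhdsWithin_le_nhds
    · filter_upwards [self_mem_nhdsWithin] with r hr n
      have h0 : (0:ℝ) ≤ r := by linarith [hr.1]
      rw [Real.norm_eq_abs, abs_mul]
      calc |r^n| * |aa n| ≤ 1 * |aa n| := by
            apply mul_le_mul_of_nonneg_right _ (abs_nonneg _)
            rw [abs_of_nonneg (by positivity : (0:ℝ) ≤ r^n)]
            exact pow_le_one₀ h0 hr.2.le
        _ = |aa n| := one_mul _
  have heq : ∀ᶠ r in 𝓝[Set.Ioo ((1:ℝ)/2) 1] 1,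
      (∫ t in Set.Ioc (0:ℝ) (π/2), t * Real.log (‖zz r t‖))
        = ∑' n : ℕ, r^n * aa n := by
    filter_upwards [self_mem_nhdsWithin] with r hr
    exact integral_eq_sum (by linarith [hr.1]) hr.2
  exact tendsto_nhds_unique (hA.congr' heq) hB

theorem first_odd_logsine_moment :
    ∫ t in (0:ℝ)..(π / 2), t * Real.log (Real.sin t) =
      7 / 16 * zetaVal 3 - π ^ 2 / 8 * Real.log 2 := by
  have hpi := Real.pi_pos
  have h1 : IntegrableOn (fun t => t * Real.log (2 * Real.sin t)) (Set.Ioc 0 (π/2)) volume := by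
    apply Integrable.mono' integrable_GG
    · exact (measurable_id.mul ((Real.measurable_log).comp
        (measurable_const.mul Real.measurable_sin))).aestronglyMeasurable
    · rw [ae_restrict_iff' measurableSet_Ioc]
      refine Eventually.of_forall fun t ht => ?_
      have hs0 : 0 < Real.sin t := Real.sin_pos_of_pos_of_lt_pi ht.1 (by linarith [ht.2])
      have hs1 : Real.sin t ≤ 1 := Real.sin_le_one t
      have hb := log_bound ht.1 ht.2 (by linarith : Real.sin t ≤ 2 * Real.sin t)
        (by linarith : 2 * Real.sin t ≤ 2)
      calc ‖t * Real.log (2 * Real.sin t)‖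
          = |t| * |Real.log (2 * Real.sin t)| := by rw [Real.norm_eq_abs, abs_mul]
        _ ≤ (π/2) * GG t := by
            apply mul_le_mul _ hb (abs_nonneg _) (by linarith)
            rw [abs_of_pos ht.1]; exact ht.2
  have h2 : IntegrableOn (fun t : ℝ => t * Real.log 2) (Set.Ioc 0 (π/2)) volume :=
    (continuous_id.mul continuous_const).integrableOn_Ioc
  have hsplit : ∫ t in Set.Ioc (0:ℝ) (π/2), t * Real.log (Real.sin t)
      = (∫ t in Set.Ioc (0:ℝ) (π/2), t * Real.log (2 * Real.sin t))
        - ∫ t in Set.Ioc (0:ℝ) (π/2), t * Real.log 2 := by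
    rw [← integral_sub h1 h2]
    apply setIntegral_congr_fun measurableSet_Ioc
    intro t ht
    have hs : 0 < Real.sin t := Real.sin_pos_of_pos_of_lt_pi ht.1 (by linarith [ht.2])
    simp only []
    rw [Real.log_mul two_ne_zero hs.ne']
    ring
  have hlog2 : ∫ t in Set.Ioc (0:ℝ) (π/2), t * Real.log 2 = π^2/8 * Real.log 2 := by
    rw [← intervalIntegral.integral_of_le (by linarith : (0:ℝ) ≤ π/2),
      intervalIntegral.integral_mul_const, integral_id]
    ring
  rw [intervalIntegral.integral_of_le (by linarith : (0:ℝ) ≤ π/2), hsplit, key_limit,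
    sum_aa.tsum_eq, hlog2]
end
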